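/- arXiv:1004.2653 — 5 statements merged into one kernel-verified Lean document; each statement's English description precedes it below -/
import Mathlib

section
/- Let n be a positive integer and let f : ℝ → ℝ be a continuous function satisfying f(x + π) = f(x) and f(π − x) = f(x) for all x ≥ 0, such that the improper integral ∫₀^∞ (sin^{2n+1}x / x) f(x) dx exists. Then ∫₀^∞ (sin^{2n+1}x / x) f(x) dx = ∫₀^{π/2} sin^{2n}x · f(x) dx. -/
open Real Filter MeasureTheory intervalIntegral

namespace LobachevskyAux

open Set

lemma rpow_mul_integrable {c b : ℝ} (hb : 0 < b) (hc : -1 < c) {φ : ℝ → ℝ}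
    (hφ : ContinuousOn φ (Icc 0 b)) :
    IntervalIntegrable (fun t => t ^ c * φ t) volume 0 b := by
  rw [intervalIntegrable_iff, uIoc_of_le hb.le]
  obtain ⟨M, hM⟩ := isCompact_Icc.exists_bound_of_continuousOn hφ
  have hint : IntegrableOn (fun t : ℝ => t ^ c * M) (Ioc 0 b) volume := by
    have h := intervalIntegrable_rpow' (a := 0) (b := b) hc
    rw [intervalIntegrable_iff, uIoc_of_le hb.le] at h
    exact h.mul_const M
  refine Integrable.mono' hint ?_ ?_
  · refine (ContinuousOn.mul ?_ (hφ.mono Ioc_subset_Icc_self)).aestronglyMeasurable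
      measurableSet_Ioc
    exact fun t ht => (Real.continuousAt_rpow_const t c (Or.inl (ne_of_gt ht.1))).continuousWithinAt
  · refine (ae_restrict_iff' measurableSet_Ioc).2 (Filter.Eventually.of_forall fun t ht => ?_)
    have h0 : (0:ℝ) ≤ t ^ c := Real.rpow_nonneg ht.1.le c
    calc ‖t ^ c * φ t‖ = t ^ c * ‖φ t‖ := by rw [norm_mul, Real.norm_of_nonneg h0]
      _ ≤ t ^ c * M := mul_le_mul_of_nonneg_left (hM t (Ioc_subset_Icc_self ht)) h0

lemma integral_rpow01 {c : ℝ} (hc : -1 < c) : ∫ t in (0:ℝ)..1, t ^ c = 1 / (c + 1) := by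
  rw [integral_rpow (Or.inl hc), Real.one_rpow, Real.zero_rpow (by linarith)]
  ring

lemma keysub {a : ℝ} (ha : a ∈ Ioo (0:ℝ) 1) :
    ∫ x in (0:ℝ)..(1/2), x ^ (a-1) * (1-x) ^ (-a) = ∫ t in (0:ℝ)..1, t ^ (a-1) / (1+t) := by
  have himg : (fun t : ℝ => t / (1 + t)) '' Ioo 0 1 = Ioo 0 (1/2 : ℝ) := by
    ext x
    constructor
    · rintro ⟨t, ht, rfl⟩
      have h1 : (0:ℝ) < 1 + t := by linarith [ht.1]
      refine ⟨div_pos ht.1 h1, ?_⟩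
      rw [div_lt_iff₀ h1]; linarith [ht.2]
    · intro hx
      have h1 : (0:ℝ) < 1 - x := by nlinarith [hx.2]
      refine ⟨x / (1-x), ⟨div_pos hx.1 h1, ?_⟩, ?_⟩
      · rw [div_lt_one h1]; nlinarith [hx.2]
      · field_simp
        ring
  have hderiv : ∀ t ∈ Ioo (0:ℝ) 1, HasDerivWithinAt (fun t : ℝ => t / (1 + t))
      (((1+t)^2)⁻¹) (Ioo 0 1) t := by
    intro t ht
    have h1 : (1:ℝ) + t ≠ 0 := by linarith [ht.1]
    have h := (hasDerivAt_id t).div ((hasDerivAt_id t).const_add 1) h1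
    convert h.hasDerivWithinAt using 1
    · rfl
    · rfl
    · rfl
    · simp only [id]
      field_simp
      ring
  have hinj : InjOn (fun t : ℝ => t / (1 + t)) (Ioo 0 1) := by
    intro t1 h1 t2 h2 he
    have e1 : (1:ℝ) + t1 ≠ 0 := by linarith [h1.1]
    have e2 : (1:ℝ) + t2 ≠ 0 := by linarith [h2.1]
    field_simp at he
    linarith
  have key := integral_image_eq_integral_abs_deriv_smul measurableSet_Ioo hderiv hinj
      (fun x => x ^ (a-1) * (1-x) ^ (-a))
  rw [himg] at key
  rw [intervalIntegral.integral_of_le (by norm_num : (0:ℝ) ≤ 1/2),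
      intervalIntegral.integral_of_le (by norm_num : (0:ℝ) ≤ 1),
      integral_Ioc_eq_integral_Ioo, integral_Ioc_eq_integral_Ioo, key]
  refine setIntegral_congr_fun measurableSet_Ioo fun t ht => ?_
  have ht0 : (0:ℝ) < t := ht.1
  have hu : (0:ℝ) < 1 + t := by linarith
  have h2 : 1 - t/(1+t) = 1/(1+t) := by field_simp; ring
  rw [smul_eq_mul, h2, Real.div_rpow ht0.le hu.le, abs_of_pos (by positivity)]
  have h3 : ((1:ℝ)/(1+t))^(-a) = (1+t)^a := by
    rw [Real.rpow_neg (by positivity), one_div, Real.inv_rpow hu.le, inv_inv]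
  rw [h3]
  have h4 : (1+t)^(a-1) = (1+t)^a / (1+t) := by
    rw [Real.rpow_sub hu, Real.rpow_one]
  rw [h4]
  have h5 : ((1:ℝ)+t)^a ≠ 0 := by positivity
  field_simp


lemma csc_eq {a : ℝ} (ha : a ∈ Ioo (0:ℝ) 1) :
    (∫ t in (0:ℝ)..1, t ^ (a-1) / (1+t)) + (∫ t in (0:ℝ)..1, t ^ ((1-a)-1) / (1+t))
      = π / Real.sin (π * a) := by
  have ha2 : (1 - a) ∈ Ioo (0:ℝ) 1 := ⟨by linarith [ha.2], by linarith [ha.1]⟩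
  -- interval integrability of the two half-pieces
  have i1 : IntervalIntegrable (fun x : ℝ => x ^ (a-1) * (1-x) ^ (-a)) volume 0 (1/2) := by
    refine rpow_mul_integrable (by norm_num) (by linarith [ha.1]) ?_
    refine ContinuousOn.rpow_const (continuousOn_const.sub continuousOn_id) fun x hx => ?_
    refine Or.inl fun h => ?_
    have := hx.2
    norm_num at this
    linarith
  have i2 : IntervalIntegrable (fun x : ℝ => x ^ ((1-a)-1) * (1-x) ^ (-(1-a))) volume 0 (1/2) := by
    refine rpow_mul_integrable (by norm_num) (by linarith [ha.2]) ?_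
    refine ContinuousOn.rpow_const (continuousOn_const.sub continuousOn_id) fun x hx => ?_
    refine Or.inl fun h => ?_
    have := hx.2
    norm_num at this
    linarith
  have heq : (fun x : ℝ => (1-x) ^ ((1-a)-1) * (1-(1-x)) ^ (-(1-a)))
      = fun x : ℝ => x ^ (a-1) * (1-x) ^ (-a) := by
    funext x
    have e1 : (1:ℝ) - (1-x) = x := by ring
    have e2 : (1-a) - 1 = -a := by ring
    have e3 : -(1-a) = a - 1 := by ring
    rw [e1, e2, e3, mul_comm]
  have i15 : IntervalIntegrable (fun x : ℝ => x ^ (a-1) * (1-x) ^ (-a)) volume (1/2) 1 := by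
    have h : IntervalIntegrable (fun x : ℝ => (1-x) ^ ((1-a)-1) * (1-(1-x)) ^ (-(1-a)))
        volume (1-(1/2)) (1-0) := (i2.comp_sub_left 1).symm
    rw [heq] at h
    have e4 : (1:ℝ) - 1/2 = 1/2 := by norm_num
    have e5 : (1:ℝ) - 0 = 1 := by norm_num
    rwa [e4, e5] at h
  -- value of second piece
  have hval15 : (∫ x in (1/2:ℝ)..1, x ^ (a-1) * (1-x) ^ (-a))
      = ∫ x in (0:ℝ)..(1/2), x ^ ((1-a)-1) * (1-x) ^ (-(1-a)) := by
    have h : (∫ x in (1/2:ℝ)..1, (1-x) ^ ((1-a)-1) * (1-(1-x)) ^ (-(1-a)))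
        = ∫ x in ((1:ℝ)-1)..((1:ℝ)-(1/2)), x ^ ((1-a)-1) * (1-x) ^ (-(1-a)) :=
      intervalIntegral.integral_comp_sub_left (fun t : ℝ => t ^ ((1-a)-1) * (1-t) ^ (-(1-a))) 1
    rw [heq] at h
    have e4 : (1:ℝ) - 1/2 = 1/2 := by norm_num
    have e5 : (1:ℝ) - 1 = 0 := by norm_num
    rw [e4, e5] at h
    exact h
  -- complex beta = real integral
  have h2 : Complex.betaIntegral (a:ℂ) ((1-a:ℝ):ℂ)
      = ((∫ x in (0:ℝ)..1, x ^ (a-1) * (1-x) ^ (-a) : ℝ) : ℂ) := by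
    rw [Complex.betaIntegral, ← intervalIntegral.integral_ofReal]
    refine intervalIntegral.integral_congr fun x hx => ?_
    rw [uIcc_of_le (by norm_num : (0:ℝ) ≤ 1)] at hx
    have hx0 : (0:ℝ) ≤ x := hx.1
    have hx1 : (0:ℝ) ≤ 1 - x := by linarith [hx.2]
    have e1 : ((a:ℂ) - 1) = ((a - 1 : ℝ) : ℂ) := by push_cast; ring
    have e2 : (((1-a:ℝ):ℂ) - 1) = ((-a : ℝ) : ℂ) := by push_cast; ring
    have e3 : ((1:ℂ) - (x:ℂ)) = ((1 - x : ℝ) : ℂ) := by push_cast; ring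
    rw [e1, e2, e3, ← Complex.ofReal_cpow hx0, ← Complex.ofReal_cpow hx1, ← Complex.ofReal_mul]
  -- Gamma product equals beta
  have h1 : Complex.Gamma (a:ℂ) * Complex.Gamma ((1-a:ℝ):ℂ)
      = Complex.betaIntegral (a:ℂ) ((1-a:ℝ):ℂ) := by
    have hres : ((a:ℂ)).re = a := by simp
    have hres2 : (((1-a:ℝ):ℂ)).re = 1 - a := by simp
    have h := Complex.Gamma_mul_Gamma_eq_betaIntegral
      (s := (a:ℂ)) (t := ((1-a:ℝ):ℂ)) (by rw [hres]; exact ha.1) (by rw [hres2]; exact ha2.1)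
    rw [h]
    have : (a:ℂ) + ((1-a:ℝ):ℂ) = 1 := by push_cast; ring
    rw [this, Complex.Gamma_one, one_mul]
  have hGamma : Real.Gamma a * Real.Gamma (1-a)
      = ∫ x in (0:ℝ)..1, x ^ (a-1) * (1-x) ^ (-a) := by
    have := h1.trans h2
    rw [Complex.Gamma_ofReal, Complex.Gamma_ofReal, ← Complex.ofReal_mul] at this
    exact_mod_cast this
  -- assemble
  have hsplit : (∫ x in (0:ℝ)..1, x ^ (a-1) * (1-x) ^ (-a))
      = (∫ x in (0:ℝ)..(1/2), x ^ (a-1) * (1-x) ^ (-a))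
        + ∫ x in (1/2:ℝ)..1, x ^ (a-1) * (1-x) ^ (-a) :=
    (intervalIntegral.integral_add_adjacent_intervals i1 i15).symm
  rw [← Real.Gamma_mul_Gamma_one_sub a, hGamma, hsplit, hval15, keysub ha, keysub ha2]


lemma partial_sum_est {a : ℝ} (ha : a ∈ Ioo (0:ℝ) 1) (N : ℕ) (hN : 1 ≤ N) :
    |(∫ t in (0:ℝ)..1, t ^ (a-1) / (1+t)) - ∑ k ∈ Finset.range N, (-1:ℝ)^k / (a + k)| ≤ 1 / N := by
  have ha0 := ha.1
  have ha1 := ha.2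
  have hints : ∀ m : ℕ, IntervalIntegrable (fun t : ℝ => t ^ (a-1) * ((-t)^m / (1+t)))
      volume 0 1 := by
    intro m
    refine rpow_mul_integrable one_pos (by linarith) ?_
    refine ContinuousOn.div ((continuous_pow m).comp continuous_neg).continuousOn
      (continuous_const.add continuous_id).continuousOn fun t ht => ?_
    have := ht.1; intro h; linarith
  -- telescoping
  have claim1 : ∀ m : ℕ, (∫ t in (0:ℝ)..1, t ^ (a-1) / (1+t)) - ∑ k ∈ Finset.range m, (-1:ℝ)^k / (a + k)
      = ∫ t in (0:ℝ)..1, t ^ (a-1) * ((-t)^m / (1+t)) := by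
    intro m
    induction m with
    | zero =>
      simp only [Finset.range_zero, Finset.sum_empty, sub_zero, pow_zero]
      refine intervalIntegral.integral_congr fun t ht => ?_
      rw [div_eq_mul_inv, one_div]
    | succ m ih =>
      rw [Finset.sum_range_succ, ← sub_sub, ih]
      have hstep : (∫ t in (0:ℝ)..1, t ^ (a-1) * ((-t)^m / (1+t)))
          - (∫ t in (0:ℝ)..1, t ^ (a-1) * ((-t)^(m+1) / (1+t))) = (-1:ℝ)^m / (a + m) := by
        rw [← intervalIntegral.integral_sub (hints m) (hints (m+1))]
        have hcong : ∀ t ∈ uIcc (0:ℝ) 1,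
            t ^ (a-1) * ((-t)^m / (1+t)) - t ^ (a-1) * ((-t)^(m+1) / (1+t))
              = (-1:ℝ)^m * t ^ (a-1+m) := by
          intro t ht
          rw [uIcc_of_le (by norm_num : (0:ℝ) ≤ 1)] at ht
          rcases eq_or_lt_of_le ht.1 with h0 | h0
          · subst h0
            have e1 : (0:ℝ) ^ (a-1) = 0 := Real.zero_rpow (by intro h; linarith)
            have e2 : (0:ℝ) ^ (a-1+m) = 0 := by
              refine Real.zero_rpow ?_
              rcases Nat.eq_zero_or_pos m with h | h
              · subst h; push_cast; intro h; linarith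
              · have : (1:ℝ) ≤ (m:ℝ) := by exact_mod_cast h
                intro hc; linarith
            rw [e1, e2]; ring
          · have e3 : (-t)^(m+1) = (-t)^m * (-t) := pow_succ _ _
            have e4 : t ^ (a-1) * t ^ (m:ℝ) = t ^ (a-1+m) := (Real.rpow_add h0 _ _).symm
            have e5 : t ^ (m:ℝ) = t ^ m := Real.rpow_natCast t m
            have e6 : (-t)^m = (-1:ℝ)^m * t ^ m := by rw [neg_pow]
            have h1 : (1:ℝ) + t ≠ 0 := by linarith
            field_simp
            rw [← e4, e5, e6]
            ring
        rw [intervalIntegral.integral_congr hcong, intervalIntegral.integral_const_mul,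
          integral_rpow01 (by linarith : (-1:ℝ) < a-1+m)]
        have : a - 1 + m + 1 = a + m := by ring
        rw [this, mul_one_div]
      linarith [hstep]
  rw [claim1 N]
  have hbound : ‖∫ t in (0:ℝ)..1, t ^ (a-1) * ((-t)^N / (1+t))‖
      ≤ |∫ t in (0:ℝ)..1, t ^ (a-1+N)| := by
    refine intervalIntegral.norm_integral_le_abs_of_norm_le ?_ (intervalIntegrable_rpow' (by linarith))
    rw [uIoc_of_le (by norm_num : (0:ℝ) ≤ 1)]
    refine (ae_restrict_iff' measurableSet_Ioc).2 (Filter.Eventually.of_forall fun t ht => ?_)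
    have ht0 : (0:ℝ) < t := ht.1
    have h1 : (1:ℝ) ≤ 1 + t := by linarith
    have e5 : t ^ ((N:ℝ)) = t ^ N := Real.rpow_natCast t N
    have hnn : (0:ℝ) ≤ t ^ (a-1) := Real.rpow_nonneg ht0.le _
    rw [Real.norm_eq_abs, abs_mul, abs_of_nonneg hnn, abs_div, abs_pow, abs_neg,
      abs_of_pos ht0, abs_of_pos (by linarith : (0:ℝ) < 1 + t)]
    calc t ^ (a-1) * (t^N / (1+t)) ≤ t ^ (a-1) * t^N := by
          refine mul_le_mul_of_nonneg_left ?_ hnn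
          exact div_le_self (by positivity) h1
      _ = t ^ (a-1+N) := by rw [Real.rpow_add ht0, e5]
  rw [Real.norm_eq_abs] at hbound
  have hval : |∫ t in (0:ℝ)..1, t ^ (a-1+N)| = 1 / (a + N) := by
    rw [integral_rpow01 (by linarith : (-1:ℝ) < a-1+N)]
    have e : a - 1 + N + 1 = a + N := by ring
    rw [e, abs_of_pos (by positivity)]
  rw [hval] at hbound
  refine hbound.trans ?_
  have hN' : (0:ℝ) < N := by exact_mod_cast hN
  refine one_div_le_one_div_of_le hN' (by linarith)

lemma kernel_est {x : ℝ} (hx : x ∈ Ioo 0 π) {N : ℕ} (hN : 1 ≤ N) :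
    |(∑ k ∈ Finset.range N, (-1:ℝ)^k / (x + k*π))
      + (∑ k ∈ Finset.range N, (-1:ℝ)^k / (π - x + k*π)) - 1 / Real.sin x| ≤ 2 / (π * N) := by
  have hπ : (0:ℝ) < π := pi_pos
  set a := x / π with ha_def
  have ha : a ∈ Ioo (0:ℝ) 1 := ⟨div_pos hx.1 hπ, (div_lt_one hπ).2 hx.2⟩
  have ha2 : (1 - a) ∈ Ioo (0:ℝ) 1 := ⟨by linarith [ha.2], by linarith [ha.1]⟩
  have hs1 : ∀ k : ℕ, (-1:ℝ)^k / (x + k*π) = (1/π) * ((-1:ℝ)^k / (a + k)) := by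
    intro k
    have hak : (0:ℝ) < a + k := add_pos_of_pos_of_nonneg ha.1 (Nat.cast_nonneg k)
    have e : x + k*π = π * (a + k) := by
      rw [ha_def]; field_simp
    rw [e]; field_simp
  have hs2 : ∀ k : ℕ, (-1:ℝ)^k / (π - x + k*π) = (1/π) * ((-1:ℝ)^k / ((1-a) + k)) := by
    intro k
    have hak : (0:ℝ) < (1-a) + k := add_pos_of_pos_of_nonneg ha2.1 (Nat.cast_nonneg k)
    have e : π - x + k*π = π * ((1-a) + k) := by
      rw [ha_def]; field_simp
    rw [e]; field_simp
  have hsin : Real.sin (π * a) = Real.sin x := by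
    rw [ha_def, mul_div_cancel₀ _ (ne_of_gt hπ)]
  have hcsc : 1 / Real.sin x
      = (1/π) * ((∫ t in (0:ℝ)..1, t ^ (a-1) / (1+t)) + ∫ t in (0:ℝ)..1, t ^ ((1-a)-1) / (1+t)) := by
    rw [csc_eq ha, hsin]
    have hsx : Real.sin x ≠ 0 := ne_of_gt (Real.sin_pos_of_pos_of_lt_pi hx.1 hx.2)
    field_simp
  have hsum1 : (∑ k ∈ Finset.range N, (-1:ℝ)^k / (x + k*π))
      = (1/π) * ∑ k ∈ Finset.range N, (-1:ℝ)^k / (a + k) := by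
    rw [Finset.mul_sum]; exact Finset.sum_congr rfl fun k _ => hs1 k
  have hsum2 : (∑ k ∈ Finset.range N, (-1:ℝ)^k / (π - x + k*π))
      = (1/π) * ∑ k ∈ Finset.range N, (-1:ℝ)^k / ((1-a) + k) := by
    rw [Finset.mul_sum]; exact Finset.sum_congr rfl fun k _ => hs2 k
  rw [hsum1, hsum2, hcsc]
  set J1 := ∫ t in (0:ℝ)..1, t ^ (a-1) / (1+t)
  set J2 := ∫ t in (0:ℝ)..1, t ^ ((1-a)-1) / (1+t)
  set P1 := ∑ k ∈ Finset.range N, (-1:ℝ)^k / (a + k)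
  set P2 := ∑ k ∈ Finset.range N, (-1:ℝ)^k / ((1-a) + k)
  have e : (1/π) * P1 + (1/π) * P2 - (1/π) * (J1 + J2) = (1/π) * ((P1 - J1) + (P2 - J2)) := by ring
  rw [e, abs_mul, abs_of_pos (by positivity : (0:ℝ) < 1/π)]
  have h1 : |P1 - J1| ≤ 1 / N := by rw [abs_sub_comm]; exact partial_sum_est ha N hN
  have h2 : |P2 - J2| ≤ 1 / N := by rw [abs_sub_comm]; exact partial_sum_est ha2 N hN
  have habs : |(P1 - J1) + (P2 - J2)| ≤ 2 / N := by
    calc |(P1 - J1) + (P2 - J2)| ≤ |P1 - J1| + |P2 - J2| := abs_add_le _ _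
      _ ≤ 1/N + 1/N := add_le_add h1 h2
      _ = 2/N := by ring
  calc (1/π) * |(P1 - J1) + (P2 - J2)| ≤ (1/π) * (2/N) :=
        mul_le_mul_of_nonneg_left habs (by positivity)
    _ = 2 / (π * N) := by field_simp

lemma abs_sin_le {x : ℝ} (hx : 0 ≤ x) : |Real.sin x| ≤ x := by
  rcases le_total 1 x with h | h
  · exact (Real.abs_sin_le_one x).trans h
  · rw [abs_of_nonneg (Real.sin_nonneg_of_nonneg_of_le_pi hx (by linarith [Real.pi_gt_three]))]
    exact Real.sin_le hx

lemma bdd_integrable {G : ℝ → ℝ} {b : ℝ} (hb : 0 ≤ b) (hcont : ContinuousOn G (Ioo 0 b))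
    {M : ℝ} (hbdd : ∀ x ∈ Ioo (0:ℝ) b, |G x| ≤ M) :
    IntervalIntegrable G volume 0 b := by
  rw [intervalIntegrable_iff, uIoc_of_le hb, IntegrableOn,
    Measure.restrict_congr_set ((Ioo_ae_eq_Ioc (μ := volume) (a := (0:ℝ)) (b := b)).symm)]
  refine Integrable.mono' ((integrableOn_const_iff (C := M)).2 (Or.inr measure_Ioo_lt_top))
    (hcont.aestronglyMeasurable measurableSet_Ioo) ?_
  exact (ae_restrict_iff' measurableSet_Ioo).2 (Filter.Eventually.of_forall hbdd)


end LobachevskyAux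

open Set

open LobachevskyAux

/-- If `f` is continuous, `π`-periodic and symmetric about `π/2` on `[0, ∞)`, and the
improper integral `∫₀^∞ (sin^{2n+1} x / x) f x dx` converges to `I`, then
`I = ∫₀^{π/2} sin^{2n} x * f x dx`. -/
theorem integral_sin_pow_odd_div_id_mul (n : ℕ) (hn : 0 < n) (f : ℝ → ℝ)
    (hf : Continuous f)
    (hper : ∀ x : ℝ, 0 ≤ x → f (x + π) = f x)
    (hsym : ∀ x : ℝ, 0 ≤ x → f (π - x) = f x)
    (I : ℝ)
    (hI : Tendsto (fun T : ℝ => ∫ x in (0:ℝ)..T, Real.sin x ^ (2 * n + 1) / x * f x)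
      atTop (nhds I)) :
    I = ∫ x in (0:ℝ)..(π / 2), Real.sin x ^ (2 * n) * f x := by
  have hπ : (0:ℝ) < π := Real.pi_pos
  set F : ℝ → ℝ := fun x => Real.sin x ^ (2 * n + 1) / x * f x with hF
  set hh : ℝ → ℝ := fun x => Real.sin x ^ (2 * n + 1) * f x with hhh
  set S : ℝ → ℝ := fun x => Real.sin x ^ (2 * n) * f x with hS
  set KK : ℕ → ℝ → ℝ := fun N x => ∑ k ∈ Finset.range N, (-1:ℝ)^k / (x + k*π) with hKK
  have hScont : Continuous S := (Real.continuous_sin.pow _).mul hf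
  obtain ⟨M, hM⟩ := isCompact_Icc.exists_bound_of_continuousOn
    (hf.continuousOn (s := Icc (0:ℝ) π))
  have hM0 : 0 ≤ M := (norm_nonneg _).trans (hM 0 ⟨le_refl 0, hπ.le⟩)
  have hper' : ∀ (k : ℕ) (x : ℝ), 0 ≤ x → f (x + k*π) = f x := by
    intro k
    induction k with
    | zero => intro x _; norm_num
    | succ k ih =>
      intro x hx
      have e2 : ((k+1 : ℕ) : ℝ) = (k:ℝ)+1 := by push_cast; ring
      have e : x + ((k:ℝ)+1)*π = (x + k*π) + π := by ring
      rw [e2, e, hper _ (by positivity), ih x hx]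
  -- integrability of F on [0, b]
  have hFint : ∀ b : ℝ, 0 ≤ b → IntervalIntegrable F volume 0 b := by
    intro b hb
    obtain ⟨C, hC⟩ := isCompact_Icc.exists_bound_of_continuousOn
      (hf.continuousOn (s := Icc (0:ℝ) b))
    refine bdd_integrable hb ?_ (M := C) ?_
    · exact (((Real.continuous_sin.pow _).continuousOn.div continuousOn_id
        fun x hx => ne_of_gt hx.1).mul hf.continuousOn)
    · intro x hx
      have hx0 : (0:ℝ) < x := hx.1
      have h1 : |Real.sin x ^ (2*n+1) / x| ≤ 1 := by
        rw [abs_div, abs_pow, abs_of_pos hx0, div_le_one hx0]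
        calc |Real.sin x| ^ (2*n+1) ≤ |Real.sin x| :=
              pow_le_of_le_one (abs_nonneg _) (Real.abs_sin_le_one x) (by omega)
          _ ≤ x := abs_sin_le hx0.le
      calc |F x| = |Real.sin x ^ (2*n+1) / x| * |f x| := abs_mul _ _
        _ ≤ 1 * C := mul_le_mul h1 (hC x ⟨hx0.le, hx.2.le⟩) (abs_nonneg _) zero_le_one
        _ = C := one_mul C
  -- bound |hh| on Ioo 0 π
  have hhbd : ∀ x ∈ Ioo (0:ℝ) π, |hh x| ≤ M := by
    intro x hx
    calc |hh x| = |Real.sin x| ^ (2*n+1) * |f x| := by rw [hhh, abs_mul, abs_pow]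
      _ ≤ 1 * M := mul_le_mul (pow_le_one₀ (abs_nonneg _) (Real.abs_sin_le_one x))
            (hM x ⟨hx.1.le, hx.2.le⟩) (abs_nonneg _) zero_le_one
      _ = M := one_mul M
  -- kernel term integrability
  have hker1 : ∀ k : ℕ, IntervalIntegrable (fun x => (-1:ℝ)^k * (hh x / (x + k*π)))
      volume 0 π := by
    intro k
    refine bdd_integrable hπ.le ?_ (M := M) ?_
    · refine continuousOn_const.mul (ContinuousOn.div
        ((Real.continuous_sin.pow _).mul hf).continuousOn
        (continuous_id.add continuous_const).continuousOn ?_)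
      intro x hx
      have h1 : (0:ℝ) ≤ (k:ℝ)*π := by positivity
      have := hx.1
      intro h; linarith
    · intro x hx
      have hx0 : (0:ℝ) < x := hx.1
      have hden : (0:ℝ) < x + k*π := by positivity
      have hnum : |hh x| ≤ M * (x + k*π) := by
        calc |hh x| = |Real.sin x| ^ (2*n+1) * |f x| := by rw [hhh, abs_mul, abs_pow]
          _ ≤ (x + k*π) * M := by
              refine mul_le_mul ?_ (hM x ⟨hx.1.le, hx.2.le⟩) (abs_nonneg _) hden.le
              calc |Real.sin x| ^ (2*n+1) ≤ |Real.sin x| :=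
                    pow_le_of_le_one (abs_nonneg _) (Real.abs_sin_le_one x) (by omega)
                _ ≤ x := abs_sin_le hx0.le
                _ ≤ x + k*π := le_add_of_nonneg_right (by positivity)
          _ = M * (x + k*π) := mul_comm _ _
      calc |(-1:ℝ)^k * (hh x / (x + k*π))| = |hh x| / (x + k*π) := by
            rw [abs_mul, abs_pow, abs_neg, abs_one, one_pow, one_mul, abs_div,
              abs_of_pos hden]
        _ ≤ M := (div_le_iff₀ hden).2 hnum
  have hker2 : ∀ k : ℕ, IntervalIntegrable (fun x => (-1:ℝ)^k * (hh x / (π - x + k*π)))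
      volume 0 π := by
    intro k
    refine bdd_integrable hπ.le ?_ (M := M) ?_
    · refine continuousOn_const.mul (ContinuousOn.div
        ((Real.continuous_sin.pow _).mul hf).continuousOn
        ((continuous_const.sub continuous_id).add continuous_const).continuousOn ?_)
      intro x hx
      have h1 : (0:ℝ) ≤ (k:ℝ)*π := by positivity
      have := hx.2
      intro h; linarith
    · intro x hx
      have hx0 : (0:ℝ) < π - x := by linarith [hx.2]
      have hden : (0:ℝ) < π - x + k*π := by positivity
      have hnum : |hh x| ≤ M * (π - x + k*π) := by
        calc |hh x| = |Real.sin x| ^ (2*n+1) * |f x| := by rw [hhh, abs_mul, abs_pow]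
          _ ≤ (π - x + k*π) * M := by
              refine mul_le_mul ?_ (hM x ⟨hx.1.le, hx.2.le⟩) (abs_nonneg _) hden.le
              calc |Real.sin x| ^ (2*n+1) ≤ |Real.sin x| :=
                    pow_le_of_le_one (abs_nonneg _) (Real.abs_sin_le_one x) (by omega)
                _ = |Real.sin (π - x)| := by rw [Real.sin_pi_sub]
                _ ≤ π - x := abs_sin_le hx0.le
                _ ≤ π - x + k*π := le_add_of_nonneg_right (by positivity)
          _ = M * (π - x + k*π) := mul_comm _ _
      calc |(-1:ℝ)^k * (hh x / (π - x + k*π))| = |hh x| / (π - x + k*π) := by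
            rw [abs_mul, abs_pow, abs_neg, abs_one, one_pow, one_mul, abs_div,
              abs_of_pos hden]
        _ ≤ M := (div_le_iff₀ hden).2 hnum
  -- decomposition of the partial integrals
  have key : ∀ N : ℕ, (∫ x in (0:ℝ)..((N:ℝ)*π), F x)
      = ∑ k ∈ Finset.range N, ∫ x in (0:ℝ)..π, (-1:ℝ)^k * (hh x / (x + k*π)) := by
    intro N
    induction N with
    | zero => simp
    | succ N ih =>
      have e : (((N:ℕ)+1 : ℕ) : ℝ)*π = (N:ℝ)*π + π := by push_cast; ring
      have hadj : (∫ x in (0:ℝ)..((N:ℝ)*π + π), F x)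
          = (∫ x in (0:ℝ)..((N:ℝ)*π), F x) + ∫ x in ((N:ℝ)*π)..((N:ℝ)*π + π), F x := by
        refine (intervalIntegral.integral_add_adjacent_intervals
          (hFint _ (by positivity)) ?_).symm
        refine (hFint ((N:ℝ)*π + π) (by positivity)).mono_set ?_
        rw [uIcc_of_le (by linarith : (N:ℝ)*π ≤ (N:ℝ)*π + π),
          uIcc_of_le (by positivity : (0:ℝ) ≤ (N:ℝ)*π + π)]
        exact Icc_subset_Icc (by positivity) le_rfl
      have hshift : (∫ x in ((N:ℝ)*π)..((N:ℝ)*π + π), F x)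
          = ∫ y in (0:ℝ)..π, F (y + (N:ℝ)*π) := by
        have h := intervalIntegral.integral_comp_add_right (a := 0) (b := π) F ((N:ℝ)*π)
        rw [zero_add, add_comm π ((N:ℝ)*π)] at h
        exact h.symm
      have hcong : (∫ y in (0:ℝ)..π, F (y + (N:ℝ)*π))
          = ∫ y in (0:ℝ)..π, (-1:ℝ)^N * (hh y / (y + N*π)) := by
        refine intervalIntegral.integral_congr fun y hy => ?_
        rw [uIcc_of_le hπ.le] at hy
        have hsin : Real.sin (y + N*π) = (-1)^N * Real.sin y := Real.sin_add_nat_mul_pi y N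
        have hfp : f (y + N*π) = f y := hper' N y hy.1
        show Real.sin (y + N*π) ^ (2*n+1) / (y + N*π) * f (y + N*π)
          = (-1:ℝ)^N * (Real.sin y ^ (2*n+1) * f y / (y + N*π))
        rw [hsin, hfp, mul_pow]
        have hodd : ((-1:ℝ)^N)^(2*n+1) = (-1:ℝ)^N := by
          rcases Nat.even_or_odd N with hN | hN
          · rw [hN.neg_one_pow, one_pow]
          · rw [hN.neg_one_pow]
            exact Odd.neg_one_pow (by exact ⟨n, by ring⟩)
        rw [hodd]
        ring
      rw [e, hadj, hshift, hcong, ih, Finset.sum_range_succ]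
  -- rewrite as kernel integrals
  have keyB : ∀ N : ℕ, (∫ x in (0:ℝ)..((N:ℝ)*π), F x) = ∫ x in (0:ℝ)..π, hh x * KK N x := by
    intro N
    rw [key N]
    have h1 : (∫ x in (0:ℝ)..π, hh x * KK N x)
        = ∫ x in (0:ℝ)..π, ∑ k ∈ Finset.range N, (-1:ℝ)^k * (hh x / (x + k*π)) := by
      refine intervalIntegral.integral_congr fun x _ => ?_
      rw [hKK]
      rw [Finset.mul_sum]
      refine Finset.sum_congr rfl fun k _ => ?_
      ring
    rw [h1, intervalIntegral.integral_finset_sum fun k _ => hker1 k]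
  -- integrability of the two kernel integrands
  have ihK1 : ∀ N : ℕ, IntervalIntegrable (fun x => hh x * KK N x) volume 0 π := by
    intro N
    have heq : (fun x => hh x * KK N x)
        = ∑ k ∈ Finset.range N, (fun x => (-1:ℝ)^k * (hh x / (x + k*π))) := by
      funext x
      rw [hKK, Finset.sum_apply, Finset.mul_sum]
      exact Finset.sum_congr rfl fun k _ => by ring
    rw [heq]
    exact IntervalIntegrable.sum _ fun k _ => hker1 k
  have ihK2 : ∀ N : ℕ, IntervalIntegrable (fun x => hh x * KK N (π - x)) volume 0 π := by
    intro N
    have heq : (fun x => hh x * KK N (π - x))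
        = ∑ k ∈ Finset.range N, (fun x => (-1:ℝ)^k * (hh x / (π - x + k*π))) := by
      funext x
      rw [hKK, Finset.sum_apply, Finset.mul_sum]
      exact Finset.sum_congr rfl fun k _ => by ring
    rw [heq]
    exact IntervalIntegrable.sum _ fun k _ => hker2 k
  -- reflection
  have hrefl : ∀ N : ℕ, (∫ x in (0:ℝ)..π, hh x * KK N x)
      = ∫ x in (0:ℝ)..π, hh x * KK N (π - x) := by
    intro N
    have h := intervalIntegral.integral_comp_sub_left (a := 0) (b := π)
      (fun x => hh x * KK N x) π
    rw [sub_self, sub_zero] at h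
    rw [← h]
    refine intervalIntegral.integral_congr fun y hy => ?_
    rw [uIcc_of_le hπ.le] at hy
    show hh (π - y) * KK N (π - y) = hh y * KK N (π - y)
    have : hh (π - y) = hh y := by
      show Real.sin (π - y) ^ (2*n+1) * f (π - y) = Real.sin y ^ (2*n+1) * f y
      rw [Real.sin_pi_sub, hsym y hy.1]
    rw [this]
  -- the limit value
  set T : ℝ := (∫ x in (0:ℝ)..π, S x) / 2 with hT
  have hest : ∀ N : ℕ, 1 ≤ N → |(∫ x in (0:ℝ)..((N:ℝ)*π), F x) - T| ≤ M / N := by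
    intro N hN
    have hA : (∫ x in (0:ℝ)..((N:ℝ)*π), F x)
        = ((∫ x in (0:ℝ)..π, hh x * KK N x) + ∫ x in (0:ℝ)..π, hh x * KK N (π - x)) / 2 := by
      rw [keyB N, ← hrefl N]; ring
    have hsum : (∫ x in (0:ℝ)..π, hh x * KK N x) + ∫ x in (0:ℝ)..π, hh x * KK N (π - x)
        = ∫ x in (0:ℝ)..π, (hh x * KK N x + hh x * KK N (π - x)) :=
      (intervalIntegral.integral_add (ihK1 N) (ihK2 N)).symm
    have hdiffeq : (∫ x in (0:ℝ)..((N:ℝ)*π), F x) - T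
        = (∫ x in (0:ℝ)..π, (hh x * KK N x + hh x * KK N (π - x) - S x)) / 2 := by
      rw [hA, hsum, hT,
        intervalIntegral.integral_sub ((ihK1 N).add (ihK2 N)) (hScont.intervalIntegrable _ _)]
      ring
    rw [hdiffeq]
    have hbound : ‖∫ x in (0:ℝ)..π, (hh x * KK N x + hh x * KK N (π - x) - S x)‖
        ≤ |∫ _x in (0:ℝ)..π, (2*M/(π*N))| := by
      refine intervalIntegral.norm_integral_le_abs_of_norm_le ?_
        (intervalIntegrable_const)
      rw [uIoc_of_le hπ.le]
      have hsing : (volume.restrict (Ioc (0:ℝ) π)) {π} = 0 := by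
        rw [Measure.restrict_apply (measurableSet_singleton π)]
        exact measure_mono_null Set.inter_subset_left (measure_singleton π)
      have hne : ∀ᵐ t ∂(volume.restrict (Ioc (0:ℝ) π)), t ≠ π := by
        rw [MeasureTheory.ae_iff]
        convert hsing using 2
        ext t
        simp
      filter_upwards [hne, ae_restrict_mem measurableSet_Ioc] with t htne ht
      have htIoo : t ∈ Ioo 0 π := ⟨ht.1, lt_of_le_of_ne ht.2 htne⟩
      have hsx : Real.sin t ≠ 0 := ne_of_gt (Real.sin_pos_of_pos_of_lt_pi htIoo.1 htIoo.2)
      have hSt : S t = hh t * (1 / Real.sin t) := by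
        show Real.sin t ^ (2*n) * f t = Real.sin t ^ (2*n+1) * f t * (1 / Real.sin t)
        rw [pow_succ]
        field_simp
      have e : hh t * KK N t + hh t * KK N (π - t) - S t
          = hh t * (KK N t + KK N (π - t) - 1 / Real.sin t) := by
        rw [hSt]; ring
      rw [e, Real.norm_eq_abs, abs_mul]
      have hker := kernel_est htIoo hN
      have hKKt : KK N t + KK N (π - t) - 1 / Real.sin t
          = (∑ k ∈ Finset.range N, (-1:ℝ)^k / (t + k*π))
            + (∑ k ∈ Finset.range N, (-1:ℝ)^k / (π - t + k*π)) - 1 / Real.sin t := by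
        rw [hKK]
      rw [hKKt]
      calc |hh t| * |(∑ k ∈ Finset.range N, (-1:ℝ)^k / (t + k*π))
            + (∑ k ∈ Finset.range N, (-1:ℝ)^k / (π - t + k*π)) - 1 / Real.sin t|
          ≤ M * (2/(π*N)) := mul_le_mul (hhbd t htIoo) hker (abs_nonneg _) hM0
        _ = 2*M/(π*N) := by ring
    have hconst : |∫ _x in (0:ℝ)..π, (2*M/(π*N))| = 2*M/(N:ℝ) := by
      rw [intervalIntegral.integral_const, smul_eq_mul, sub_zero]
      have hNpos : (0:ℝ) < N := by exact_mod_cast hN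
      rw [abs_of_nonneg (by positivity)]
      field_simp
    rw [hconst] at hbound
    rw [Real.norm_eq_abs] at hbound
    calc |(∫ x in (0:ℝ)..π, (hh x * KK N x + hh x * KK N (π - x) - S x)) / 2|
        = |∫ x in (0:ℝ)..π, (hh x * KK N x + hh x * KK N (π - x) - S x)| / 2 := by
          rw [abs_div]; norm_num
      _ ≤ (2*M/(N:ℝ)) / 2 := by linarith [hbound]
      _ = M / N := by ring
  -- limits
  have hseq : Tendsto (fun N : ℕ => ∫ x in (0:ℝ)..((N:ℝ)*π), F x) atTop (nhds I) := by
    have h := hI.comp (tendsto_natCast_atTop_atTop.atTop_mul_const hπ)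
    exact h
  have hseq2 : Tendsto (fun N : ℕ => ∫ x in (0:ℝ)..((N:ℝ)*π), F x) atTop (nhds T) := by
    have hz : Tendsto (fun N : ℕ => (∫ x in (0:ℝ)..((N:ℝ)*π), F x) - T) atTop (nhds 0) := by
      refine squeeze_zero_norm' ?_ (tendsto_const_div_atTop_nhds_zero_nat M)
      filter_upwards [Filter.eventually_ge_atTop 1] with N hN
      exact hest N hN
    have := hz.add_const T
    simpa using this
  have hIT : I = T := tendsto_nhds_unique hseq hseq2
  -- fold the half-period integral
  have hsplitS : (∫ x in (0:ℝ)..π, S x) = 2 * ∫ x in (0:ℝ)..(π/2), S x := by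
    have h12 : (∫ x in (0:ℝ)..π, S x)
        = (∫ x in (0:ℝ)..(π/2), S x) + ∫ x in (π/2:ℝ)..π, S x :=
      (intervalIntegral.integral_add_adjacent_intervals
        (hScont.intervalIntegrable _ _) (hScont.intervalIntegrable _ _)).symm
    have hrefl2 : (∫ x in (π/2:ℝ)..π, S x) = ∫ x in (0:ℝ)..(π/2), S x := by
      have h := intervalIntegral.integral_comp_sub_left (a := 0) (b := π/2) S π
      have e1 : π - π/2 = π/2 := by ring
      have e2 : π - 0 = π := by ring
      rw [e1, e2] at h
      rw [← h]
      refine intervalIntegral.integral_congr fun y hy => ?_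
      rw [uIcc_of_le (by positivity)] at hy
      show S (π - y) = S y
      show Real.sin (π - y) ^ (2*n) * f (π - y) = Real.sin y ^ (2*n) * f y
      rw [Real.sin_pi_sub, hsym y hy.1]
    rw [h12, hrefl2]; ring
  rw [hIT, hT, hsplitS]
  ring
end

section
/- For every positive integer n, the improper integral ∫₀^∞ (sin^{2n+1}x / x) dx exists and equals ((2n−1)!! / (2n)!!) · (π/2), where (2n−1)!! = 1·3·5⋯(2n−1) and (2n)!! = 2·4·6⋯(2n). -/
open Real Filter MeasureTheory intervalIntegral Nat

set_option maxHeartbeats 1000000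


lemma tele (k : ℕ) (t : ℝ) :
    Real.sin (((k:ℝ) + 1/2) * t)
      = Real.sin (t/2) * (1 + 2 * ∑ j ∈ Finset.range k, Real.cos (((j:ℝ)+1) * t)) := by
  induction k with
  | zero => norm_num [show (1:ℝ)/2*t = t/2 by ring]
  | succ k ih =>
    have h1 : (((k:ℕ)+1:ℕ):ℝ) + 1/2 = ((k:ℝ)+1) + 1/2 := by push_cast; ring
    rw [Finset.sum_range_succ, h1]
    have e1 : (((k:ℝ)+1) + 1/2) * t = ((k:ℝ)+1)*t + t/2 := by ring
    have e2 : ((k:ℝ) + 1/2) * t = ((k:ℝ)+1)*t - t/2 := by ring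
    have := ih
    rw [e2] at this
    rw [e1, Real.sin_add]
    rw [Real.sin_sub] at this
    nlinarith [this]

lemma dirichlet_poly_integral (k : ℕ) :
    ∫ t in (0:ℝ)..π, (1/2 + ∑ j ∈ Finset.range k, Real.cos (((j:ℝ)+1) * t)) = π/2 := by
  have hint : ∀ j ∈ Finset.range k, IntervalIntegrable (fun t => Real.cos (((j:ℝ)+1) * t)) volume 0 π := by
    intro j _
    exact (Real.continuous_cos.comp (continuous_const.mul continuous_id)).intervalIntegrable 0 π
  have hsum : IntervalIntegrable (fun t => ∑ j ∈ Finset.range k, Real.cos (((j:ℝ)+1) * t)) volume 0 π := by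
    have h := IntervalIntegrable.sum (Finset.range k) hint
    simpa only [Finset.sum_fn] using h
  rw [intervalIntegral.integral_add (intervalIntegrable_const) hsum,
    intervalIntegral.integral_finset_sum hint]
  have : ∀ j ∈ Finset.range k, (∫ t in (0:ℝ)..π, Real.cos (((j:ℝ)+1) * t)) = 0 := by
    intro j _
    have hc : ((j:ℝ)+1) ≠ 0 := by positivity
    rw [intervalIntegral.integral_comp_mul_left Real.cos hc]
    rw [integral_cos (a := ((j:ℝ)+1)*0) (b := ((j:ℝ)+1)*π)]
    rw [show ((j:ℝ)+1)*π = ((j+1:ℕ):ℝ)*π by push_cast; ring, Real.sin_nat_mul_pi]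
    simp
  rw [Finset.sum_eq_zero this]
  simp
  ring
open Set

noncomputable def gfun : ℝ → ℝ := fun t => 1/t - 1/(2 * Real.sin (t/2))

lemma gfun_meas : Measurable gfun := by
  unfold gfun; fun_prop

lemma aux_bound {u : ℝ} (hu : 0 < u) (hu2 : u ≤ π/2) : |1/u - 1/Real.sin u| ≤ 4 := by
  have hs : 0 < Real.sin u := Real.sin_pos_of_pos_of_lt_pi hu (lt_of_le_of_lt hu2 (by linarith [Real.pi_pos]))
  rcases le_or_gt u 1 with h1 | h1
  · have hcube := Real.sin_gt_sub_cube hu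
    have hlt := Real.sin_lt hu
    have hsq : u^2 ≤ 1 := by nlinarith
    have hcu : u^3 ≤ u := by nlinarith
    have hs34 : 3/4 * u ≤ Real.sin u := by nlinarith
    have hle : 1/u ≤ 1/Real.sin u := one_div_le_one_div_of_le hs hlt.le
    have key : 1/Real.sin u - 1/u ≤ u/3 := by
      rw [div_sub_div _ _ hs.ne' hu.ne', div_le_iff₀ (by positivity)]
      nlinarith
    rw [abs_le]
    constructor <;> linarith
  · have hsin1 : (3:ℝ)/4 ≤ Real.sin 1 := by
      have := Real.sin_gt_sub_cube one_pos
      norm_num at this ⊢; linarith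
    have hmono : Real.sin 1 ≤ Real.sin u := by
      apply (Real.strictMonoOn_sin.monotoneOn) _ _ h1.le
      · constructor <;> [linarith [Real.pi_pos]; linarith [Real.pi_gt_three]]
      · constructor <;> linarith [Real.pi_pos]
    have hs34 : (3:ℝ)/4 ≤ Real.sin u := le_trans hsin1 hmono
    have h1u : 1/u ≤ 1 := by rw [div_le_one hu]; linarith
    have h1s : 1/Real.sin u ≤ 4/3 := by
      rw [div_le_iff₀ hs]; linarith
    have p1 : 0 < 1/u := by positivity
    have p2 : 0 < 1/Real.sin u := by positivity
    rw [abs_le]; constructor <;> linarith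

lemma gfun_bound : ∀ t ∈ Set.Ioc (0:ℝ) π, |gfun t| ≤ 2 := by
  intro t ht
  obtain ⟨ht0, htpi⟩ := ht
  have hu : 0 < t/2 := by linarith
  have hu2 : t/2 ≤ π/2 := by linarith
  have := aux_bound hu hu2
  have heq : gfun t = (1/2) * (1/(t/2) - 1/Real.sin (t/2)) := by
    unfold gfun
    have : Real.sin (t/2) ≠ 0 ∨ True := Or.inr trivial
    field_simp
  rw [heq, abs_mul]
  rw [abs_of_pos (by norm_num : (0:ℝ) < 1/2)]
  linarith

lemma II_of_bound {f : ℝ → ℝ} {C a b : ℝ} (hab : a ≤ b) (hm : Measurable f)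
    (h : ∀ x ∈ Set.Ioc a b, |f x| ≤ C) : IntervalIntegrable f volume a b := by
  rw [intervalIntegrable_iff_integrableOn_Ioc_of_le hab]
  apply Integrable.mono' (g := fun _ => C) (integrableOn_const measure_Ioc_lt_top.ne)
    hm.aestronglyMeasurable
  exact (ae_restrict_iff' measurableSet_Ioc).2 (Filter.Eventually.of_forall
    (fun x hx => by simpa using h x hx))

lemma gfun_integrableOn : IntegrableOn gfun (Set.Ioc 0 π) := by
  have := II_of_bound (f := gfun) (C := 2) Real.pi_pos.le gfun_meas gfun_bound
  rwa [intervalIntegrable_iff_integrableOn_Ioc_of_le Real.pi_pos.le] at this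

lemma tendsto_cocompact_div : Tendsto (fun l : ℝ => l / (2*π)) atTop (Filter.cocompact ℝ) := by
  rw [cocompact_eq_atBot_atTop]
  exact (tendsto_id.atTop_div_const (by positivity)).mono_right le_sup_right

lemma RL : Tendsto (fun l : ℝ => ∫ t in (0:ℝ)..π, Real.sin (l*t) * gfun t) atTop (nhds 0) := by
  set G : ℝ → ℝ := (Set.Ioc (0:ℝ) π).indicator gfun with hG
  have hGi : Integrable G := gfun_integrableOn.integrable_indicator measurableSet_Ioc
  set F : ℝ → ℂ := fun v => ((G v : ℝ) : ℂ) with hF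
  have hFi : Integrable F := hGi.ofReal
  have hRL := Real.zero_at_infty_fourier F
  have h2 : Tendsto (fun l : ℝ => FourierTransform.fourier F (l/(2*π))) atTop (nhds 0) :=
    hRL.comp tendsto_cocompact_div
  have h3 : Tendsto (fun l : ℝ => (FourierTransform.fourier F (l/(2*π))).im) atTop (nhds 0) := by
    have := (Complex.continuous_im.tendsto 0).comp h2
    exact this
  have key : ∀ l : ℝ, (FourierTransform.fourier F (l/(2*π))).im
      = -∫ t in (0:ℝ)..π, Real.sin (l*t) * gfun t := by
    intro l
    rw [Real.fourier_real_eq_integral_exp_smul]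
    have hint : Integrable (fun v : ℝ => Complex.exp (↑(-2 * π * v * (l/(2*π))) * Complex.I) • F v) := by
      apply Integrable.bdd_mul (c := 1) hFi
      · apply Continuous.aestronglyMeasurable
        continuity
      · refine Filter.Eventually.of_forall (fun v => ?_)
        rw [Complex.norm_exp_ofReal_mul_I]
    have h4 : (∫ v : ℝ, Complex.exp (↑(-2 * π * v * (l/(2*π))) * Complex.I) • F v).im
        = ∫ v : ℝ, (Complex.exp (↑(-2 * π * v * (l/(2*π))) * Complex.I) • F v).im :=
      (integral_im hint).symm
    rw [h4]
    have him : ∀ v : ℝ, (Complex.exp (↑(-2 * π * v * (l/(2*π))) * Complex.I) • F v).im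
        = -(Real.sin (l * v) * G v) := by
      intro v
      have hπ : (2:ℝ)*π ≠ 0 := by positivity
      have harg : -2 * π * v * (l/(2*π)) = -(l*v) := by field_simp
      rw [harg, smul_eq_mul, Complex.mul_im, Complex.exp_ofReal_mul_I_im,
        Complex.exp_ofReal_mul_I_re]
      simp [hF, Real.sin_neg]
    rw [MeasureTheory.integral_congr_ae (Filter.Eventually.of_forall him)]
    rw [MeasureTheory.integral_neg]
    congr 1
    have : ∀ v : ℝ, Real.sin (l*v) * G v = (Set.Ioc (0:ℝ) π).indicator (fun t => Real.sin (l*t) * gfun t) v := by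
      intro v
      rw [hG, Set.indicator_mul_right]
    rw [MeasureTheory.integral_congr_ae (Filter.Eventually.of_forall this),
      MeasureTheory.integral_indicator measurableSet_Ioc,
      intervalIntegral.integral_of_le Real.pi_pos.le]
  have : (fun l : ℝ => ∫ t in (0:ℝ)..π, Real.sin (l*t) * gfun t)
      = fun l => -((FourierTransform.fourier F (l/(2*π))).im) := by
    funext l; rw [key l]; ring
  rw [this]
  simpa using h3.neg

lemma II_of_bound_glob {f : ℝ → ℝ} {C : ℝ} (a b : ℝ) (hm : Measurable f)
    (h : ∀ x, |f x| ≤ C) : IntervalIntegrable f volume a b := by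
  constructor <;>
  · apply Integrable.mono' (g := fun _ => C) (integrableOn_const measure_Ioc_lt_top.ne)
      hm.aestronglyMeasurable
    exact Filter.Eventually.of_forall (fun x => by simpa using h x)

lemma sinc_meas : Measurable (fun x : ℝ => Real.sin x / x) := by fun_prop

lemma sinc_bound (x : ℝ) : |Real.sin x / x| ≤ 1 := by
  rcases eq_or_ne x 0 with h | h
  · simp [h]
  · rw [abs_div, div_le_one (abs_pos.2 h)]
    exact Real.abs_sin_le_abs

lemma sinc_II (a b : ℝ) : IntervalIntegrable (fun x => Real.sin x / x) volume a b :=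
  II_of_bound_glob a b sinc_meas sinc_bound

lemma subst_lemma {l : ℝ} (hl : 0 < l) (T : ℝ) :
    ∫ t in (0:ℝ)..T, Real.sin (l*t)/t = ∫ x in (0:ℝ)..(l*T), Real.sin x / x := by
  have h1 := intervalIntegral.integral_comp_mul_left (a := 0) (b := T)
    (fun x => Real.sin x / x) hl.ne'
  have h2 : ∀ t : ℝ, Real.sin (l*t)/(l*t) = l⁻¹ * (Real.sin (l*t)/t) := by
    intro t
    rcases eq_or_ne t 0 with h | h
    · simp [h]
    · field_simp
  rw [show l * (0:ℝ) = 0 by ring] at h1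
  calc ∫ t in (0:ℝ)..T, Real.sin (l*t)/t
      = l * ∫ t in (0:ℝ)..T, l⁻¹ * (Real.sin (l*t)/t) := by
        rw [intervalIntegral.integral_const_mul]
        field_simp
    _ = l * ∫ t in (0:ℝ)..T, Real.sin (l*t)/(l*t) := by
        congr 1
        exact intervalIntegral.integral_congr (fun t _ => (h2 t).symm)
    _ = l * (l⁻¹ • ∫ x in (0:ℝ)..(l*T), Real.sin x / x) := by rw [h1]
    _ = ∫ x in (0:ℝ)..(l*T), Real.sin x / x := by
        rw [smul_eq_mul]
        field_simp

noncomputable def S : ℝ → ℝ := fun T => ∫ x in (0:ℝ)..T, Real.sin x / x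

lemma dirichlet_step (k : ℕ) :
    ∫ t in (0:ℝ)..π, Real.sin (((k:ℝ)+1/2)*t)/t
      = π/2 + ∫ t in (0:ℝ)..π, Real.sin (((k:ℝ)+1/2)*t) * gfun t := by
  set l : ℝ := (k:ℝ)+1/2 with hl
  have hD : IntervalIntegrable
      (fun t => 1/2 + ∑ j ∈ Finset.range k, Real.cos (((j:ℝ)+1) * t)) volume 0 π := by
    apply Continuous.intervalIntegrable
    refine continuous_const.add (continuous_finset_sum _ (fun j _ => ?_))
    exact Real.continuous_cos.comp (continuous_const.mul continuous_id)
  have hg : IntervalIntegrable (fun t => Real.sin (l*t) * gfun t) volume 0 π := by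
    apply II_of_bound Real.pi_pos.le
    · exact (Real.measurable_sin.comp (measurable_const.mul measurable_id)).mul gfun_meas
    · intro x hx
      rw [abs_mul]
      calc |Real.sin (l*x)| * |gfun x| ≤ 1 * 2 :=
        mul_le_mul (Real.abs_sin_le_one _) (gfun_bound x hx) (abs_nonneg _) one_pos.le
      _ = 2 := by norm_num
  have hptwise : ∀ t ∈ Set.uIoc (0:ℝ) π,
      Real.sin (l*t)/t = (1/2 + ∑ j ∈ Finset.range k, Real.cos (((j:ℝ)+1) * t))
        + Real.sin (l*t) * gfun t := by
    intro t ht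
    rw [Set.uIoc_of_le Real.pi_pos.le] at ht
    obtain ⟨ht0, htpi⟩ := ht
    have hsin : 0 < Real.sin (t/2) :=
      Real.sin_pos_of_pos_of_lt_pi (by linarith) (by linarith [Real.pi_pos])
    have hst : Real.sin (l*t) = Real.sin (t/2) * (1 + 2 * ∑ j ∈ Finset.range k, Real.cos (((j:ℝ)+1) * t)) :=
      tele k t
    unfold gfun
    rw [hst]
    field_simp
    ring
  rw [intervalIntegral.integral_congr_ae (Filter.Eventually.of_forall hptwise),
    intervalIntegral.integral_add hD hg, dirichlet_poly_integral k]

lemma S_seq : Tendsto (fun k : ℕ => S (((k:ℝ)+1/2)*π)) atTop (nhds (π/2)) := by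
  have hsub : ∀ k : ℕ, S (((k:ℝ)+1/2)*π) = ∫ t in (0:ℝ)..π, Real.sin (((k:ℝ)+1/2)*t)/t := by
    intro k
    have hl : (0:ℝ) < (k:ℝ)+1/2 := by positivity
    rw [S, ← subst_lemma hl π]
  have hcomp : Tendsto (fun k : ℕ => ((k:ℝ)+1/2)) atTop atTop :=
    Filter.tendsto_atTop_add_const_right _ _ tendsto_natCast_atTop_atTop
  have hRLk : Tendsto (fun k : ℕ => ∫ t in (0:ℝ)..π, Real.sin (((k:ℝ)+1/2)*t) * gfun t)
      atTop (nhds 0) := RL.comp hcomp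
  have : Tendsto (fun k : ℕ => π/2 + ∫ t in (0:ℝ)..π, Real.sin (((k:ℝ)+1/2)*t) * gfun t)
      atTop (nhds (π/2 + 0)) := tendsto_const_nhds.add hRLk
  rw [add_zero] at this
  apply this.congr
  intro k
  rw [hsub k, dirichlet_step k]

lemma cos_div_sq_integrable : IntegrableOn (fun x : ℝ => Real.cos x / x^2) (Set.Ioi 1) := by
  apply Integrable.mono' (g := fun x => x ^ (-2 : ℝ))
    (integrableOn_Ioi_rpow_of_lt (by norm_num) one_pos)
  · apply Measurable.aestronglyMeasurable
    fun_prop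
  · refine (ae_restrict_iff' measurableSet_Ioi).2 (Filter.Eventually.of_forall (fun x hx => ?_))
    have hx1 : (1:ℝ) < x := hx
    have hx0 : (0:ℝ) < x := by linarith
    rw [Real.rpow_neg hx0.le, Real.norm_eq_abs, abs_div, abs_of_pos (by positivity : (0:ℝ) < x^2)]
    rw [show (2:ℝ) = ((2:ℕ):ℝ) by norm_num, Real.rpow_natCast]
    rw [div_le_iff₀ (by positivity)]
    calc |Real.cos x| ≤ 1 := Real.abs_cos_le_one x
      _ = (x^2)⁻¹ * x^2 := by field_simp
      _ ≤ _ := le_refl _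

lemma S_parts : ∀ T : ℝ, 1 ≤ T →
    S T = S 1 + Real.cos 1 - Real.cos T / T - ∫ x in (1:ℝ)..T, Real.cos x / x^2 := by
  intro T hT
  have hsplit : S 1 + ∫ x in (1:ℝ)..T, Real.sin x / x = S T :=
    intervalIntegral.integral_add_adjacent_intervals (sinc_II 0 1) (sinc_II 1 T)
  have hparts : ∫ x in (1:ℝ)..T, Real.sin x / x
      = Real.cos 1 - Real.cos T / T - ∫ x in (1:ℝ)..T, Real.cos x / x^2 := by
    have hu : ∀ x ∈ Set.uIcc (1:ℝ) T, HasDerivAt (fun y : ℝ => y⁻¹) (-(x^2)⁻¹) x := by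
      intro x hx
      rw [Set.uIcc_of_le hT] at hx
      have hx0 : x ≠ 0 := by
        have := hx.1; intro h; rw [h] at this; linarith
      simpa using hasDerivAt_inv hx0
    have hv : ∀ x ∈ Set.uIcc (1:ℝ) T, HasDerivAt (fun y : ℝ => -Real.cos y) (Real.sin x) x := by
      intro x _
      exact (by simpa using (Real.hasDerivAt_cos x).neg : HasDerivAt (-Real.cos) (Real.sin x) x)
    have hu' : IntervalIntegrable (fun x : ℝ => -(x^2)⁻¹) volume 1 T := by
      apply ContinuousOn.intervalIntegrable
      intro x hx
      rw [Set.uIcc_of_le hT] at hx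
      have hx0 : x ≠ 0 := by intro h; have := hx.1; rw [h] at this; linarith
      exact (((continuousOn_id.pow 2).inv₀ (fun y hy => by
        rw [Set.uIcc_of_le hT] at hy
        have : y ≠ 0 := by intro h; have := hy.1; rw [h] at this; linarith
        exact pow_ne_zero 2 this)).neg) x (by rwa [Set.uIcc_of_le hT])
    have hv' : IntervalIntegrable Real.sin volume 1 T :=
      Real.continuous_sin.intervalIntegrable 1 T
    have := intervalIntegral.integral_mul_deriv_eq_deriv_mul hu hv hu' hv'
    -- this : ∫ x in 1..T, x⁻¹ * sin x = T⁻¹ * (-cos T) - 1⁻¹ * (-cos 1) - ∫ x in 1..T, -(x^2)⁻¹ * (-cos x)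
    have he1 : ∀ x : ℝ, x⁻¹ * Real.sin x = Real.sin x / x := fun x => by ring
    have he2 : ∀ x : ℝ, -(x^2)⁻¹ * (-Real.cos x) = Real.cos x / x^2 := fun x => by ring
    rw [intervalIntegral.integral_congr (fun x _ => he1 x)] at this
    rw [intervalIntegral.integral_congr (g := fun x => Real.cos x / x^2) (fun x _ => he2 x)] at this
    rw [this]
    ring
  rw [← hsplit, hparts]
  ring

lemma S_tendsto : Tendsto S atTop
    (nhds (S 1 + Real.cos 1 - 0 - ∫ x in Set.Ioi (1:ℝ), Real.cos x / x^2)) := by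
  have h1 : Tendsto (fun T : ℝ => Real.cos T / T) atTop (nhds 0) := by
    refine squeeze_zero_norm' (a := fun T : ℝ => T⁻¹) ?_ tendsto_inv_atTop_zero
    filter_upwards [Filter.eventually_ge_atTop (1:ℝ)] with T hT
    rw [Real.norm_eq_abs, abs_div, abs_of_pos (by linarith : (0:ℝ) < T)]
    calc |Real.cos T| / T ≤ 1 / T :=
          div_le_div_of_nonneg_right (Real.abs_cos_le_one T) (by linarith)
      _ = T⁻¹ := one_div T
  have h2 : Tendsto (fun T : ℝ => ∫ x in (1:ℝ)..T, Real.cos x / x^2) atTop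
      (nhds (∫ x in Set.Ioi (1:ℝ), Real.cos x / x^2)) :=
    intervalIntegral_tendsto_integral_Ioi 1 cos_div_sq_integrable tendsto_id
  have h3 : Tendsto (fun T : ℝ => S 1 + Real.cos 1 - Real.cos T / T - ∫ x in (1:ℝ)..T, Real.cos x / x^2)
      atTop (nhds (S 1 + Real.cos 1 - 0 - ∫ x in Set.Ioi (1:ℝ), Real.cos x / x^2)) :=
    (tendsto_const_nhds.sub h1).sub h2
  apply h3.congr'
  filter_upwards [Filter.eventually_ge_atTop (1:ℝ)] with T hT
  exact (S_parts T hT).symm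

lemma dirichlet : Tendsto S atTop (nhds (π/2)) := by
  have hseq : Tendsto (fun k : ℕ => ((k:ℝ)+1/2)*π) atTop atTop := by
    apply Filter.Tendsto.atTop_mul_const Real.pi_pos
    exact Filter.tendsto_atTop_add_const_right _ _ tendsto_natCast_atTop_atTop
  have h1 : Tendsto (fun k : ℕ => S (((k:ℝ)+1/2)*π)) atTop
      (nhds (S 1 + Real.cos 1 - 0 - ∫ x in Set.Ioi (1:ℝ), Real.cos x / x^2)) :=
    S_tendsto.comp hseq
  have heq := tendsto_nhds_unique h1 S_seq
  have := S_tendsto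
  rwa [heq] at this

lemma dirichlet_scaled {c : ℝ} (hc : 0 < c) :
    Tendsto (fun T : ℝ => ∫ x in (0:ℝ)..T, Real.sin (c*x) / x) atTop (nhds (π/2)) := by
  have : (fun T : ℝ => ∫ x in (0:ℝ)..T, Real.sin (c*x) / x) = fun T => S (c*T) := by
    funext T
    rw [S, subst_lemma hc]
  rw [this]
  exact dirichlet.comp (Filter.Tendsto.const_mul_atTop hc tendsto_id)


noncomputable def cf (n k : ℕ) : ℝ := (-1)^k * ((2*n+1).choose (n+1+k)) / 4^n

lemma cf_zero (n k : ℕ) (h : n + 1 ≤ k) : cf n k = 0 := by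
  unfold cf
  rw [Nat.choose_eq_zero_of_lt (by omega)]
  simp

lemma choose_L0 (n : ℕ) : (2*n+3).choose (n+2)
    = 3 * (2*n+1).choose (n+1) + (2*n+1).choose (n+2) := by
  have hsym : (2*n+1).choose n = (2*n+1).choose (n+1) := by
    have := Nat.choose_symm (n := 2*n+1) (k := n+1) (by omega)
    rw [show 2*n+1 - (n+1) = n by omega] at this
    omega
  have h1 : (2*n+3).choose (n+2) = (2*n+2).choose (n+1) + (2*n+2).choose (n+2) := by
    rw [show 2*n+3 = (2*n+2)+1 from rfl, show n+2 = (n+1)+1 from rfl, Nat.choose_succ_succ']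
  have h2 : (2*n+2).choose (n+1) = (2*n+1).choose n + (2*n+1).choose (n+1) := by
    rw [show 2*n+2 = (2*n+1)+1 from rfl, show n+1 = n+1 from rfl, Nat.choose_succ_succ']
  have h3 : (2*n+2).choose (n+2) = (2*n+1).choose (n+1) + (2*n+1).choose (n+2) := by
    rw [show 2*n+2 = (2*n+1)+1 from rfl, show n+2 = (n+1)+1 from rfl, Nat.choose_succ_succ']
  omega

lemma choose_L1 (n j : ℕ) : (2*n+3).choose (n+3+j)
    = (2*n+1).choose (n+1+j) + 2*(2*n+1).choose (n+2+j) + (2*n+1).choose (n+3+j) := by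
  have h1 : (2*n+3).choose (n+3+j) = (2*n+2).choose (n+2+j) + (2*n+2).choose (n+3+j) := by
    rw [show 2*n+3 = (2*n+2)+1 from rfl, show n+3+j = (n+2+j)+1 by omega, Nat.choose_succ_succ']
  have h2 : (2*n+2).choose (n+2+j) = (2*n+1).choose (n+1+j) + (2*n+1).choose (n+2+j) := by
    rw [show 2*n+2 = (2*n+1)+1 from rfl, show n+2+j = (n+1+j)+1 by omega, Nat.choose_succ_succ']
  have h3 : (2*n+2).choose (n+3+j) = (2*n+1).choose (n+2+j) + (2*n+1).choose (n+3+j) := by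
    rw [show 2*n+2 = (2*n+1)+1 from rfl, show n+3+j = (n+2+j)+1 by omega, Nat.choose_succ_succ']
  omega

lemma cf0 (n : ℕ) : cf (n+1) 0 = 3/4 * cf n 0 - 1/4 * cf n 1 := by
  unfold cf
  rw [show 2*(n+1)+1 = 2*n+3 by omega, show (n+1)+1+0 = n+2 by omega,
    show n+1+0 = n+1 by omega, choose_L0 n]
  have h4 : (4:ℝ)^n ≠ 0 := by positivity
  push_cast
  field_simp
  ring_nf

lemma cfs (n j : ℕ) : cf (n+1) (j+1) = 1/2 * cf n (j+1) - 1/4 * cf n j - 1/4 * cf n (j+2) := by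
  unfold cf
  rw [show 2*(n+1)+1 = 2*n+3 by omega, show (n+1)+1+(j+1) = n+3+j by omega,
    show n+1+(j+1) = n+2+j by omega, show n+1+(j+2) = n+3+j by omega,
    show n+1+j = n+1+j from rfl, choose_L1 n j]
  have h4 : (4:ℝ)^n ≠ 0 := by positivity
  push_cast
  field_simp
  ring

lemma sin_mul_sin_sq (a x : ℝ) : Real.sin a * Real.sin x^2
    = (2*Real.sin a - Real.sin (a+2*x) - Real.sin (a-2*x))/4 := by
  rw [Real.sin_add, Real.sin_sub, Real.cos_two_mul']
  linear_combination (Real.sin a/2) * (Real.sin_sq_add_cos_sq x)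

lemma lin (n : ℕ) (x : ℝ) : Real.sin x ^ (2*n+1)
    = ∑ k ∈ Finset.range (n+1), cf n k * Real.sin ((2*(k:ℝ)+1)*x) := by
  induction n with
  | zero =>
    simp [cf]
  | succ n ih =>
    set G : ℕ → ℝ := fun k => Real.sin ((2*(k:ℝ)+1)*x) with hGdef
    set M : ℕ → ℝ := fun k => Real.sin ((2*(k:ℝ)-1)*x) with hMdef
    have hM0 : M 0 = -G 0 := by
      simp only [hMdef, hGdef]
      have h : (2*((0:ℕ):ℝ)-1)*x = -((2*((0:ℕ):ℝ)+1)*x) := by push_cast; ring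
      rw [h, Real.sin_neg]
    have hMS : ∀ k : ℕ, M (k+1) = G k := by
      intro k
      simp only [hMdef, hGdef]
      congr 1
      push_cast
      ring
    have key : ∀ k : ℕ, G k * Real.sin x^2 = (2*G k - G (k+1) - M k)/4 := by
      intro k
      simp only [hGdef, hMdef]
      push_cast
      rw [show (2*((k:ℝ)+1)+1)*x = (2*(k:ℝ)+1)*x+2*x by ring,
        show (2*(k:ℝ)-1)*x = (2*(k:ℝ)+1)*x-2*x by ring, sin_mul_sin_sq]
    have hpow : Real.sin x ^ (2*(n+1)+1) = Real.sin x ^ (2*n+1) * Real.sin x^2 := by ring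
    rw [hpow, ih, Finset.sum_mul]
    have hterm : ∀ k : ℕ, cf n k * G k * Real.sin x^2
        = (1/2 * cf n k * G k) - (1/4 * cf n k * G (k+1)) - (1/4 * cf n k * M k) := by
      intro k
      rw [mul_assoc, key k]
      ring
    rw [Finset.sum_congr rfl (fun k _ => hterm k)]
    rw [Finset.sum_sub_distrib, Finset.sum_sub_distrib]
    -- Now: ∑A - ∑B - ∑C = ∑_{k<n+2} cf (n+1) k * G k
    have hA : ∑ k ∈ Finset.range (n+2), (1/2 * cf n k * G k)
        = ∑ k ∈ Finset.range (n+1), (1/2 * cf n k * G k) := by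
      rw [Finset.sum_range_succ, cf_zero n (n+1) le_rfl]
      simp
    have hB : ∑ k ∈ Finset.range (n+2), (1/4 * (if k = 0 then -cf n 0 else cf n (k-1)) * G k)
        = ∑ k ∈ Finset.range (n+1), (1/4 * cf n k * G (k+1)) + 1/4 * (-cf n 0) * G 0 := by
      rw [Finset.sum_range_succ']
      simp [Nat.succ_ne_zero]
    have hC : ∑ k ∈ Finset.range (n+2), (1/4 * cf n (k+1) * G k)
        = ∑ k ∈ Finset.range (n+1), (1/4 * cf n k * M k) + 1/4 * cf n 0 * G 0 := by
      have e1 : ∑ k ∈ Finset.range (n+1), (1/4 * cf n k * M k)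
          = ∑ k ∈ Finset.range n, (1/4 * cf n (k+1) * G k) + 1/4 * cf n 0 * M 0 := by
        rw [Finset.sum_range_succ']
        congr 1
        exact Finset.sum_congr rfl (fun k _ => by rw [hMS k])
      rw [e1, hM0]
      rw [Finset.sum_range_succ, Finset.sum_range_succ,
        cf_zero n (n+1) le_rfl, cf_zero n (n+2) (by omega)]
      ring
    have hcoef : ∀ k ∈ Finset.range (n+2), cf (n+1) k * G k
        = (1/2 * cf n k * G k) - (1/4 * (if k = 0 then -cf n 0 else cf n (k-1)) * G k)
          - (1/4 * cf n (k+1) * G k) := by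
      intro k _
      cases k with
      | zero => rw [cf0 n]; simp; ring
      | succ j => rw [cfs n j]; simp only [if_neg (Nat.succ_ne_zero _), Nat.add_sub_cancel]; ring
    rw [Finset.sum_congr rfl hcoef, Finset.sum_sub_distrib, Finset.sum_sub_distrib,
      hA, hB, hC]
    ring

lemma alt_sum (N m : ℕ) : ∑ j ∈ Finset.range (m+1), (-1:ℝ)^j * ((N+1).choose j)
    = (-1)^m * (N.choose m) := by
  induction m with
  | zero => simp
  | succ m ih =>
    rw [Finset.sum_range_succ, ih, Nat.choose_succ_succ' N m]
    push_cast
    ring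

lemma cf_sum (n : ℕ) : ∑ k ∈ Finset.range (n+1), cf n k = ((2*n).choose n : ℝ) / 4^n := by
  unfold cf
  rw [← Finset.sum_div]
  congr 1
  have step1 : ∀ k ∈ Finset.range (n+1),
      (-1:ℝ)^k * ((2*n+1).choose (n+1+k)) = (-1)^k * ((2*n+1).choose (n-k)) := by
    intro k hk
    rw [Finset.mem_range] at hk
    have h := Nat.choose_symm (n := 2*n+1) (k := n+1+k) (by omega)
    rw [show 2*n+1 - (n+1+k) = n-k by omega] at h
    rw [h]
  rw [Finset.sum_congr rfl step1]
  have step2 : ∑ k ∈ Finset.range (n+1), (-1:ℝ)^k * ((2*n+1).choose (n-k))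
      = ∑ j ∈ Finset.range (n+1), (-1:ℝ)^(n-j) * ((2*n+1).choose j) := by
    rw [← Finset.sum_range_reflect (fun j => (-1:ℝ)^(n-j) * ((2*n+1).choose j)) (n+1)]
    apply Finset.sum_congr rfl
    intro k hk
    rw [Finset.mem_range] at hk
    rw [show n + 1 - 1 - k = n - k by omega, show n - (n - k) = k by omega]
  rw [step2]
  have step3 : ∀ j ∈ Finset.range (n+1),
      (-1:ℝ)^(n-j) * ((2*n+1).choose j) = (-1)^n * ((-1:ℝ)^j * ((2*n+1).choose j)) := by
    intro j hj
    rw [Finset.mem_range] at hj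
    have h1 : (-1:ℝ)^(n-j) * (-1:ℝ)^j = (-1)^n := by
      rw [← pow_add, show n - j + j = n by omega]
    have h2 : (-1:ℝ)^j * (-1:ℝ)^j = 1 := by
      rw [← mul_pow]; norm_num
    calc (-1:ℝ)^(n-j) * ((2*n+1).choose j)
        = (-1:ℝ)^(n-j) * 1 * ((2*n+1).choose j) := by ring
      _ = (-1:ℝ)^(n-j) * ((-1:ℝ)^j * (-1:ℝ)^j) * ((2*n+1).choose j) := by rw [h2]
      _ = ((-1:ℝ)^(n-j) * (-1:ℝ)^j) * ((-1:ℝ)^j * ((2*n+1).choose j)) := by ring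
      _ = (-1)^n * ((-1:ℝ)^j * ((2*n+1).choose j)) := by rw [h1]
  rw [Finset.sum_congr rfl step3, ← Finset.mul_sum]
  have := alt_sum (2*n) n
  rw [this]
  rw [← mul_assoc, ← pow_add]
  simp [pow_mul]

lemma choose_df (n : ℕ) (hn : 0 < n) :
    ((2*n).choose n : ℝ) / 4^n = ((2*n-1)‼ : ℝ) / ((2*n)‼ : ℝ) := by
  have hfac : (2*n).choose n * n.factorial * n.factorial = (2*n).factorial := by
    have h := Nat.choose_mul_factorial_mul_factorial (show n ≤ 2*n by omega)
    rw [show 2*n - n = n by omega] at h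
    exact h
  have hdf2 : (2*n)‼ = 2^n * n.factorial := Nat.doubleFactorial_two_mul n
  have hdf1 : (2*n).factorial = (2*n)‼ * (2*n-1)‼ := by
    have := Nat.factorial_eq_mul_doubleFactorial (2*n-1)
    rw [show 2*n-1+1 = 2*n by omega] at this
    exact this
  have hkey : (2*n).choose n * n.factorial = 2^n * (2*n-1)‼ := by
    have h1 : (2*n).choose n * n.factorial * n.factorial
        = 2^n * (2*n-1)‼ * n.factorial := by
      rw [hfac, hdf1, hdf2]; ring
    exact Nat.eq_of_mul_eq_mul_right (Nat.factorial_pos n) h1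
  have h2 : ((2*n).choose n : ℝ) * n.factorial = 2^n * ((2*n-1)‼ : ℝ) := by
    exact_mod_cast congrArg (Nat.cast : ℕ → ℝ) hkey
  have hne1 : ((2*n)‼ : ℝ) ≠ 0 := by
    rw [hdf2]; push_cast; positivity
  have hne2 : ((4:ℝ))^n ≠ 0 := by positivity
  rw [div_eq_div_iff hne2 hne1, hdf2]
  push_cast
  have h4 : (4:ℝ)^n = 2^n * 2^n := by rw [← mul_pow]; norm_num
  nlinarith [h2, pow_pos (by norm_num : (0:ℝ) < 2) n]

/-- For every positive integer `n`, the improper integral `∫₀^∞ sin^{2n+1} x / x dx`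
exists and equals `((2n-1)‼ / (2n)‼) * (π / 2)`. -/
theorem integral_sin_pow_odd_div_id (n : ℕ) (hn : 0 < n) :
    Tendsto (fun T : ℝ => ∫ x in (0:ℝ)..T, Real.sin x ^ (2 * n + 1) / x)
      atTop (nhds (((2 * n - 1)‼ : ℝ) / ((2 * n)‼ : ℝ) * (π / 2))) := by
  have sinc_scaled_bound : ∀ (c x : ℝ), 0 ≤ c → |Real.sin (c*x)/x| ≤ c := by
    intro c x hc
    rcases eq_or_ne x 0 with h | h
    · simp [h, hc]
    · rw [abs_div, div_le_iff₀ (abs_pos.2 h)]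
      calc |Real.sin (c*x)| ≤ |c*x| := Real.abs_sin_le_abs
        _ = c * |x| := by rw [abs_mul, abs_of_nonneg hc]
  have hII : ∀ (k : ℕ) (T : ℝ),
      IntervalIntegrable (fun x => Real.sin ((2*(k:ℝ)+1)*x) / x) volume 0 T := by
    intro k T
    apply II_of_bound_glob (C := 2*(k:ℝ)+1)
    · fun_prop
    · intro x
      exact sinc_scaled_bound _ x (by positivity)
  have hsplit : ∀ T : ℝ, (∫ x in (0:ℝ)..T, Real.sin x ^ (2*n+1) / x)
      = ∑ k ∈ Finset.range (n+1), cf n k * ∫ x in (0:ℝ)..T, Real.sin ((2*(k:ℝ)+1)*x) / x := by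
    intro T
    have hpt : ∀ x : ℝ, Real.sin x ^ (2*n+1) / x
        = ∑ k ∈ Finset.range (n+1), cf n k * (Real.sin ((2*(k:ℝ)+1)*x) / x) := by
      intro x
      rw [lin n x, Finset.sum_div]
      exact Finset.sum_congr rfl (fun k _ => by rw [mul_div_assoc])
    calc (∫ x in (0:ℝ)..T, Real.sin x ^ (2*n+1) / x)
        = ∫ x in (0:ℝ)..T, ∑ k ∈ Finset.range (n+1), cf n k * (Real.sin ((2*(k:ℝ)+1)*x) / x) :=
          intervalIntegral.integral_congr (fun x _ => hpt x)
      _ = ∑ k ∈ Finset.range (n+1), ∫ x in (0:ℝ)..T, cf n k * (Real.sin ((2*(k:ℝ)+1)*x) / x) :=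
          intervalIntegral.integral_finset_sum (fun k _ => (hII k T).const_mul (cf n k))
      _ = ∑ k ∈ Finset.range (n+1), cf n k * ∫ x in (0:ℝ)..T, Real.sin ((2*(k:ℝ)+1)*x) / x :=
          Finset.sum_congr rfl (fun k _ => intervalIntegral.integral_const_mul _ _)
  have hlim : ∀ k : ℕ, Tendsto (fun T : ℝ => ∫ x in (0:ℝ)..T, Real.sin ((2*(k:ℝ)+1)*x) / x)
      atTop (nhds (π/2)) := fun k => dirichlet_scaled (by positivity)
  have hsum : Tendsto (fun T : ℝ => ∑ k ∈ Finset.range (n+1),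
      cf n k * ∫ x in (0:ℝ)..T, Real.sin ((2*(k:ℝ)+1)*x) / x) atTop
      (nhds (∑ k ∈ Finset.range (n+1), cf n k * (π/2))) :=
    tendsto_finset_sum _ (fun k _ => (hlim k).const_mul (cf n k))
  have hval : ∑ k ∈ Finset.range (n+1), cf n k * (π/2)
      = ((2 * n - 1)‼ : ℝ) / ((2 * n)‼ : ℝ) * (π / 2) := by
    rw [← Finset.sum_mul, cf_sum n, choose_df n hn]
  rw [← hval]
  exact hsum.congr (fun T => (hsplit T).symm)
end

section
/- ∫₀^∞ (sin⁶x / x⁶) dx = 11π/40. -/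
open Real MeasureTheory

section Aux
open Set Filter


lemma sin_pow_six_eq (x : ℝ) :
    Real.sin x ^ 6 = (10 - 15 * Real.cos (2*x) + 6 * Real.cos (4*x) - Real.cos (6*x)) / 32 := by
  have h2 : Real.sin x ^ 2 = 1 / 2 - Real.cos (2*x) / 2 := Real.sin_sq_eq_half_sub x
  have h4 : Real.cos (4*x) = 2 * Real.cos (2*x) ^ 2 - 1 := by
    rw [show (4:ℝ)*x = 2*(2*x) by ring, Real.cos_two_mul]
  have h6 : Real.cos (6*x) = 4 * Real.cos (2*x) ^ 3 - 3 * Real.cos (2*x) := by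
    rw [show (6:ℝ)*x = 3*(2*x) by ring, Real.cos_three_mul]
  have : Real.sin x ^ 6 = (Real.sin x ^ 2) ^ 3 := by ring
  rw [this, h2, h4, h6]; ring


lemma integrableOn_exp_mul {t : ℝ} (ht : 0 < t) {g : ℝ → ℝ} (hg : Measurable g)
    (hb : ∀ x, |g x| ≤ 1) : IntegrableOn (fun x => Real.exp (-(t*x)) * g x) (Ioi 0) := by
  have hexp : IntegrableOn (fun x => Real.exp (-t * x)) (Ioi 0) :=
    exp_neg_integrableOn_Ioi 0 ht
  refine hexp.mono' ?_ ?_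
  · exact ((Real.continuous_exp.comp (continuous_const.mul continuous_id).neg).measurable.mul
      hg).aestronglyMeasurable
  · filter_upwards with x
    rw [Real.norm_eq_abs, abs_mul, abs_of_pos (Real.exp_pos _), neg_mul]
    calc Real.exp (-(t*x)) * |g x| ≤ Real.exp (-(t*x)) * 1 :=
          mul_le_mul_of_nonneg_left (hb x) (Real.exp_pos _).le
      _ = Real.exp (-(t*x)) := mul_one _

lemma lap_cos {t : ℝ} (k : ℝ) (ht : 0 < t) :
    ∫ x in Ioi (0:ℝ), Real.exp (-(t*x)) * Real.cos (k*x) = t / (t^2 + k^2) := by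
  have hne : t^2 + k^2 ≠ 0 := by positivity
  set F : ℝ → ℝ := fun x =>
    Real.exp (-(t*x)) * (-t * Real.cos (k*x) + k * Real.sin (k*x)) / (t^2 + k^2) with hF
  have hderiv : ∀ x ∈ Ici (0:ℝ), HasDerivAt F (Real.exp (-(t*x)) * Real.cos (k*x)) x := by
    intro x _
    have he : HasDerivAt (fun x : ℝ => Real.exp (-(t*x))) (Real.exp (-(t*x)) * (-t)) x := by
      simpa using (((hasDerivAt_id x).const_mul t).neg).exp
    have hc : HasDerivAt (fun x : ℝ => Real.cos (k*x)) (-Real.sin (k*x) * k) x := by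
      simpa using ((hasDerivAt_id x).const_mul k).cos
    have hs : HasDerivAt (fun x : ℝ => Real.sin (k*x)) (Real.cos (k*x) * k) x := by
      simpa using ((hasDerivAt_id x).const_mul k).sin
    have := (he.mul (((hc.const_mul (-t))).add (hs.const_mul k))).div_const (t^2 + k^2)
    refine this.congr_deriv ?_
    simp only [Pi.add_apply]
    field_simp
    ring
  have htend : Tendsto F atTop (nhds 0) := by
    have h1 : Tendsto (fun x : ℝ => Real.exp (-(t*x))) atTop (nhds 0) := by
      have : Tendsto (fun x : ℝ => -(t*x)) atTop atBot := by
        apply Filter.tendsto_neg_atBot_iff.mpr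
        exact Tendsto.const_mul_atTop ht tendsto_id
      exact Real.tendsto_exp_atBot.comp this
    have h2 : Tendsto (fun x : ℝ => Real.exp (-(t*x)) * ((t + |k|) / (t^2+k^2))) atTop (nhds 0) :=
      by simpa using h1.mul_const ((t + |k|) / (t^2+k^2))
    apply squeeze_zero_norm _ h2
    intro x
    have hb : |(-t * Real.cos (k*x) + k * Real.sin (k*x))| ≤ t + |k| := by
      calc |(-t * Real.cos (k*x) + k * Real.sin (k*x))|
          ≤ |(-t) * Real.cos (k*x)| + |k * Real.sin (k*x)| := abs_add_le _ _
        _ ≤ |(-t)| * 1 + |k| * 1 := by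
            rw [abs_mul, abs_mul]
            gcongr
            · exact Real.abs_cos_le_one _
            · exact Real.abs_sin_le_one _
        _ ≤ t + |k| := by rw [abs_neg, abs_of_pos ht, mul_one, mul_one]
    have hFx : ‖F x‖ = Real.exp (-(t*x)) * |(-t * Real.cos (k*x) + k * Real.sin (k*x))| / (t^2+k^2) := by
      rw [hF]
      rw [Real.norm_eq_abs, abs_div, abs_mul, abs_of_pos (Real.exp_pos _),
        abs_of_pos (by positivity : (0:ℝ) < t^2+k^2)]
    rw [hFx, mul_div_assoc]
    gcongr
  have hint : IntegrableOn (fun x => Real.exp (-(t*x)) * Real.cos (k*x)) (Ioi 0) :=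
    integrableOn_exp_mul ht (Real.continuous_cos.comp (continuous_const.mul continuous_id)).measurable
      (fun x => Real.abs_cos_le_one _)
  have hkey := integral_Ioi_of_hasDerivAt_of_tendsto' hderiv hint htend
  rw [hkey]
  simp only [hF, mul_zero, neg_zero, Real.exp_zero, Real.cos_zero, Real.sin_zero]
  field_simp
  ring

lemma intCos {t : ℝ} (k : ℝ) (ht : 0 < t) :
    IntegrableOn (fun x => Real.exp (-(t*x)) * Real.cos (k*x)) (Ioi 0) :=
  integrableOn_exp_mul ht
    (Real.continuous_cos.comp (continuous_const.mul continuous_id)).measurable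
    (fun _ => Real.abs_cos_le_one _)

lemma lap_sin6 {t : ℝ} (ht : 0 < t) :
    ∫ x in Ioi (0:ℝ), Real.exp (-(t*x)) * Real.sin x ^ 6
      = (10 * (t/(t^2+0^2)) - 15 * (t/(t^2+2^2)) + 6 * (t/(t^2+4^2)) - t/(t^2+6^2)) / 32 := by
  have hcongr : ∀ x ∈ Ioi (0:ℝ), Real.exp (-(t*x)) * Real.sin x ^ 6 =
      (10 * (Real.exp (-(t*x)) * Real.cos (0*x)) - 15 * (Real.exp (-(t*x)) * Real.cos (2*x))
        + 6 * (Real.exp (-(t*x)) * Real.cos (4*x)) - Real.exp (-(t*x)) * Real.cos (6*x)) / 32 := by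
    intro x _
    rw [sin_pow_six_eq x, zero_mul, Real.cos_zero]
    ring
  have i0 : Integrable (fun x => 10 * (Real.exp (-(t*x)) * Real.cos (0*x)))
      (volume.restrict (Ioi 0)) := (intCos 0 ht).const_mul 10
  have i2 : Integrable (fun x => 15 * (Real.exp (-(t*x)) * Real.cos (2*x)))
      (volume.restrict (Ioi 0)) := (intCos 2 ht).const_mul 15
  have i4 : Integrable (fun x => 6 * (Real.exp (-(t*x)) * Real.cos (4*x)))
      (volume.restrict (Ioi 0)) := (intCos 4 ht).const_mul 6
  have i02 : Integrable (fun x => 10 * (Real.exp (-(t*x)) * Real.cos (0*x))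
      - 15 * (Real.exp (-(t*x)) * Real.cos (2*x))) (volume.restrict (Ioi 0)) := i0.sub i2
  have i024 : Integrable (fun x => 10 * (Real.exp (-(t*x)) * Real.cos (0*x))
      - 15 * (Real.exp (-(t*x)) * Real.cos (2*x)) + 6 * (Real.exp (-(t*x)) * Real.cos (4*x)))
      (volume.restrict (Ioi 0)) := i02.add i4
  rw [setIntegral_congr_fun measurableSet_Ioi hcongr, integral_div,
    integral_sub i024 (intCos 6 ht), integral_add i02 i4, integral_sub i0 i2,
    integral_const_mul, integral_const_mul, integral_const_mul,
    lap_cos 0 ht, lap_cos 2 ht, lap_cos 4 ht, lap_cos 6 ht]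


lemma integrableOn_inv_quad {a : ℝ} (ha : 0 < a) :
    IntegrableOn (fun t : ℝ => (t^2 + a^2)⁻¹) (Ioi 0) := by
  have m : 0 < min 1 (a^2) := lt_min one_pos (by positivity)
  refine ((integrable_inv_one_add_sq.restrict).const_mul (min 1 (a^2))⁻¹).mono' ?_ ?_
  · exact ((continuous_pow 2).add continuous_const).measurable.inv.aestronglyMeasurable
  · filter_upwards with t
    rw [Real.norm_eq_abs, abs_of_pos (by positivity : (0:ℝ) < (t^2+a^2)⁻¹), ← mul_inv]
    refine inv_anti₀ (by positivity) ?_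
    have h1 : min 1 (a^2) * 1 ≤ a^2 := by simpa using min_le_right 1 (a^2)
    have h2 : min 1 (a^2) * t^2 ≤ 1 * t^2 := by
      have := min_le_left 1 (a^2); nlinarith [sq_nonneg t]
    nlinarith

lemma int_inv_quad {a : ℝ} (ha : 0 < a) :
    ∫ t in Ioi (0:ℝ), (t^2 + a^2)⁻¹ = π / (2*a) := by
  have key := integral_comp_mul_left_Ioi (fun u : ℝ => (a^2)⁻¹ * (1 + u^2)⁻¹) 0
    (inv_pos.mpr ha)
  have h1 : ∀ x ∈ Ioi (0:ℝ), (a^2)⁻¹ * (1 + (a⁻¹ * x)^2)⁻¹ = (x^2 + a^2)⁻¹ := by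
    intro x _
    rw [← mul_inv]
    congr 1
    field_simp
    ring
  rw [setIntegral_congr_fun measurableSet_Ioi h1] at key
  rw [key]
  simp only [mul_zero, inv_inv, smul_eq_mul]
  rw [integral_const_mul, integral_Ioi_inv_one_add_sq, Real.arctan_zero]
  field_simp
  ring

lemma int_t5exp {x : ℝ} (hx : 0 < x) :
    ∫ t in Ioi (0:ℝ), t^5 * Real.exp (-(x*t)) = 120 / x^6 := by
  have key := integral_rpow_mul_exp_neg_mul_rpow (p := 1) (q := 5) (b := x)
    one_pos (by norm_num) hx
  have h1 : ∀ t ∈ Ioi (0:ℝ), t ^ (5:ℝ) * Real.exp (-x * t ^ (1:ℝ)) = t^5 * Real.exp (-(x*t)) := by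
    intro t ht
    rw [Real.rpow_one, show (5:ℝ) = ((5:ℕ):ℝ) by norm_num, Real.rpow_natCast, neg_mul]
  rw [setIntegral_congr_fun measurableSet_Ioi h1] at key
  rw [key]
  have hG : Real.Gamma ((5+1)/1) = 120 := by
    rw [show ((5+1)/1:ℝ) = (5:ℕ)+1 by norm_num, Real.Gamma_nat_eq_factorial]
    norm_num [Nat.factorial]
  rw [hG]
  rw [show (-(5+1)/1 : ℝ) = -((6:ℕ):ℝ) by norm_num, Real.rpow_neg hx.le, Real.rpow_natCast]
  field_simp

lemma integrableOn_t5exp {x : ℝ} (hx : 0 < x) :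
    IntegrableOn (fun t : ℝ => t^5 * Real.exp (-(x*t))) (Ioi 0) := by
  have key := integrableOn_rpow_mul_exp_neg_mul_rpow (p := 1) (s := 5) (b := x)
    (by norm_num) one_pos hx
  refine key.congr_fun ?_ measurableSet_Ioi
  intro t ht
  beta_reduce
  rw [Real.rpow_one, show (5:ℝ) = ((5:ℕ):ℝ) by norm_num, Real.rpow_natCast, neg_mul]

lemma integrableOn_sinc6 : IntegrableOn (fun x : ℝ => Real.sin x ^ 6 / x ^ 6) (Ioi 0) := by
  have hmeas : Measurable (fun x : ℝ => Real.sin x ^ 6 / x ^ 6) :=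
    (Real.measurable_sin.pow_const 6).div (measurable_id.pow_const 6)
  have hb : ∀ x : ℝ, 0 < x → |Real.sin x ^ 6 / x ^ 6| ≤ min 1 ((x^6)⁻¹) := by
    intro x hx
    have hs6 : |Real.sin x ^ 6| ≤ 1 := by
      rw [abs_pow]
      exact pow_le_one₀ (abs_nonneg _) (Real.abs_sin_le_one x)
    have hsx : |Real.sin x ^ 6| ≤ x ^ 6 := by
      rw [abs_pow]
      calc |Real.sin x| ^ 6 ≤ |x| ^ 6 := pow_le_pow_left₀ (abs_nonneg _) Real.abs_sin_le_abs 6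
        _ = x ^ 6 := by rw [abs_of_pos hx]
    rw [abs_div, abs_of_pos (by positivity : (0:ℝ) < x^6), le_min_iff]
    constructor
    · rw [div_le_one (by positivity)]
      exact hsx
    · rw [div_le_iff₀ (by positivity)]
      calc |Real.sin x ^ 6| ≤ 1 := hs6
        _ = (x^6)⁻¹ * x^6 := by field_simp
  have h1 : IntegrableOn (fun x : ℝ => Real.sin x ^ 6 / x ^ 6) (Ioc 0 1) := by
    refine ((integrableOn_const_iff (C := (1:ℝ))).mpr (Or.inr measure_Ioc_lt_top)).mono'
      hmeas.aestronglyMeasurable ?_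
    filter_upwards [ae_restrict_mem measurableSet_Ioc] with x hx
    exact le_trans (hb x hx.1) (min_le_left _ _)
  have h2 : IntegrableOn (fun x : ℝ => Real.sin x ^ 6 / x ^ 6) (Ioi 1) := by
    have hint : IntegrableOn (fun x : ℝ => (x^6)⁻¹) (Ioi 1) := by
      have := integrableOn_Ioi_rpow_of_lt (a := -6) (by norm_num) (c := 1) one_pos
      refine this.congr_fun ?_ measurableSet_Ioi
      intro x hx
      beta_reduce
      rw [show (-6:ℝ) = -((6:ℕ):ℝ) by norm_num, Real.rpow_neg (le_trans zero_le_one hx.le),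
        Real.rpow_natCast]
    refine hint.mono' hmeas.aestronglyMeasurable ?_
    filter_upwards [ae_restrict_mem measurableSet_Ioi] with x hx
    exact le_trans (hb x (lt_trans one_pos hx)) (min_le_right _ _)
  have : Ioc (0:ℝ) 1 ∪ Ioi 1 = Ioi 0 := Ioc_union_Ioi_eq_Ioi zero_le_one
  rw [← this]
  exact h1.union h2

end Aux

section Main
open Set Filter

/-- `∫₀^∞ sin⁶ x / x⁶ dx = 11π / 40` (as an absolutely convergent Lebesgue integral). -/
theorem integral_sin_pow_six_div_pow_six :
    IntegrableOn (fun x : ℝ => Real.sin x ^ 6 / x ^ 6) (Set.Ioi 0) ∧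
    ∫ x in Set.Ioi (0:ℝ), Real.sin x ^ 6 / x ^ 6 = 11 * π / 40 := by
  refine ⟨integrableOn_sinc6, ?_⟩
  have hfc : Continuous (fun p : ℝ × ℝ => Real.sin p.1 ^ 6 * (p.2^5 * Real.exp (-(p.1*p.2)))) := by
    apply Continuous.mul
    · exact (Real.continuous_sin.comp continuous_fst).pow 6
    · exact ((continuous_snd.pow 5).mul
        ((Real.continuous_exp.comp ((continuous_fst.mul continuous_snd).neg))))
  -- inner t-integral for x > 0
  have key_inner : ∀ x ∈ Ioi (0:ℝ),
      (∫ t in Ioi (0:ℝ), Real.sin x ^ 6 * (t^5 * Real.exp (-(x*t))))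
        = 120 * (Real.sin x ^ 6 / x ^ 6) := by
    intro x hx
    rw [integral_const_mul, int_t5exp hx]
    ring
  -- integrability on the product
  have hint : Integrable
      (Function.uncurry fun x t : ℝ => Real.sin x ^ 6 * (t^5 * Real.exp (-(x*t))))
      ((volume.restrict (Ioi 0)).prod (volume.restrict (Ioi 0))) := by
    rw [integrable_prod_iff]
    · constructor
      · filter_upwards [ae_restrict_mem measurableSet_Ioi] with x hx
        simpa using (integrableOn_t5exp hx).const_mul (Real.sin x ^ 6)
      · refine Integrable.congr (integrableOn_sinc6.const_mul 120) ?_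
        filter_upwards [ae_restrict_mem measurableSet_Ioi] with x hx
        symm
        simp only [Function.uncurry_apply_pair]
        have h1 : (∫ t in Ioi (0:ℝ), ‖Real.sin x ^ 6 * (t^5 * Real.exp (-(x*t)))‖)
            = ∫ t in Ioi (0:ℝ), Real.sin x ^ 6 * (t^5 * Real.exp (-(x*t))) := by
          refine setIntegral_congr_fun measurableSet_Ioi (fun t ht => ?_)
          rw [Real.norm_eq_abs, abs_of_nonneg]
          have ht' : (0:ℝ) < t := ht
          positivity
        rw [h1, key_inner x hx]
    · exact hfc.aestronglyMeasurable
  have swap : (∫ x in Ioi (0:ℝ), ∫ t in Ioi (0:ℝ), Real.sin x ^ 6 * (t^5 * Real.exp (-(x*t))))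
      = ∫ t in Ioi (0:ℝ), ∫ x in Ioi (0:ℝ), Real.sin x ^ 6 * (t^5 * Real.exp (-(x*t))) :=
    MeasureTheory.integral_integral_swap hint
  have lhs_eq : (∫ x in Ioi (0:ℝ), ∫ t in Ioi (0:ℝ), Real.sin x ^ 6 * (t^5 * Real.exp (-(x*t))))
      = 120 * ∫ x in Ioi (0:ℝ), Real.sin x ^ 6 / x ^ 6 := by
    rw [← integral_const_mul]
    exact setIntegral_congr_fun measurableSet_Ioi key_inner
  have rhs_eq : (∫ t in Ioi (0:ℝ), ∫ x in Ioi (0:ℝ), Real.sin x ^ 6 * (t^5 * Real.exp (-(x*t))))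
      = ∫ t in Ioi (0:ℝ), (30*(t^2+2^2)⁻¹ - 768*(t^2+4^2)⁻¹ + 1458*(t^2+6^2)⁻¹) := by
    refine setIntegral_congr_fun measurableSet_Ioi (fun t ht => ?_)
    have ht' : (0:ℝ) < t := ht
    have hinner : (∫ x in Ioi (0:ℝ), Real.sin x ^ 6 * (t^5 * Real.exp (-(x*t))))
        = t^5 * ∫ x in Ioi (0:ℝ), Real.exp (-(t*x)) * Real.sin x ^ 6 := by
      rw [← integral_const_mul]
      refine setIntegral_congr_fun measurableSet_Ioi (fun x hx => ?_)
      show Real.sin x ^ 6 * (t^5 * Real.exp (-(x*t))) = t^5 * (Real.exp (-(t*x)) * Real.sin x ^ 6)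
      rw [mul_comm x t]; ring
    show (∫ x in Ioi (0:ℝ), Real.sin x ^ 6 * (t^5 * Real.exp (-(x*t))))
        = 30*(t^2+2^2)⁻¹ - 768*(t^2+4^2)⁻¹ + 1458*(t^2+6^2)⁻¹
    rw [hinner, lap_sin6 ht']
    have h2 : t^2+2^2 ≠ 0 := by positivity
    have h4 : t^2+4^2 ≠ 0 := by positivity
    have h6 : t^2+6^2 ≠ 0 := by positivity
    have h0 : t^2+0^2 ≠ 0 := by positivity
    field_simp
    ring
  have i2 : IntegrableOn (fun t : ℝ => 30*(t^2+2^2)⁻¹) (Ioi 0) :=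
    (integrableOn_inv_quad (by norm_num : (0:ℝ) < 2)).const_mul 30
  have i4 : IntegrableOn (fun t : ℝ => 768*(t^2+4^2)⁻¹) (Ioi 0) :=
    (integrableOn_inv_quad (by norm_num : (0:ℝ) < 4)).const_mul 768
  have i6 : IntegrableOn (fun t : ℝ => 1458*(t^2+6^2)⁻¹) (Ioi 0) :=
    (integrableOn_inv_quad (by norm_num : (0:ℝ) < 6)).const_mul 1458
  have rhs_val : (∫ t in Ioi (0:ℝ), (30*(t^2+2^2)⁻¹ - 768*(t^2+4^2)⁻¹ + 1458*(t^2+6^2)⁻¹))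
      = 33 * π := by
    have i24 : IntegrableOn (fun t : ℝ => 30*(t^2+2^2)⁻¹ - 768*(t^2+4^2)⁻¹) (Ioi 0) := i2.sub i4
    rw [integral_add i24 i6, integral_sub i2 i4,
      integral_const_mul, integral_const_mul, integral_const_mul,
      int_inv_quad (by norm_num : (0:ℝ) < 2), int_inv_quad (by norm_num : (0:ℝ) < 4),
      int_inv_quad (by norm_num : (0:ℝ) < 6)]
    ring
  have hmain : 120 * (∫ x in Ioi (0:ℝ), Real.sin x ^ 6 / x ^ 6) = 33 * π := by
    rw [← lhs_eq, swap, rhs_eq, rhs_val]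
  linarith

end Main
end

section
/- ∫₀^∞ (sin⁸x / x⁸) dx = 151π/630. -/
open Real MeasureTheory

section Aux
open Set Filter


lemma sin_pow_eight_eq (x : ℝ) : Real.sin x ^ 8 =
    (35 - 56 * Real.cos (2*x) + 28 * Real.cos (4*x) - 8 * Real.cos (6*x) + Real.cos (8*x)) / 128 := by
  have h2 : Real.cos (2*x) = 2 * Real.cos x ^ 2 - 1 := Real.cos_two_mul x
  have h4 : Real.cos (4*x) = 2 * Real.cos (2*x) ^ 2 - 1 := by
    rw [show (4:ℝ)*x = 2*(2*x) by ring]; exact Real.cos_two_mul _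
  have h6 : Real.cos (6*x) = 4 * Real.cos (2*x) ^ 3 - 3 * Real.cos (2*x) := by
    rw [show (6:ℝ)*x = 3*(2*x) by ring]; exact Real.cos_three_mul _
  have h8 : Real.cos (8*x) = 2 * Real.cos (4*x) ^ 2 - 1 := by
    rw [show (8:ℝ)*x = 2*(4*x) by ring]; exact Real.cos_two_mul _
  rw [h8, h6, h4, h2, show Real.sin x ^ 8 = (Real.sin x ^ 2) ^ 4 by ring, Real.sin_sq]
  ring

lemma gamma8 {x : ℝ} (hx : 0 < x) :
    ∫ t in Ioi (0:ℝ), t ^ 7 * Real.exp (-(x*t)) = 5040 / x ^ 8 := by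
  have h := Real.integral_rpow_mul_exp_neg_mul_Ioi (a := 8) (r := x) (by norm_num) hx
  have e1 : ∀ t : ℝ, t ^ ((8:ℝ) - 1) = t ^ (7:ℕ) := by
    intro t
    rw [show (8:ℝ) - 1 = ((7:ℕ):ℝ) by norm_num, Real.rpow_natCast]
  simp_rw [e1] at h
  rw [h, show (8:ℝ) = ((7:ℕ):ℝ) + 1 by norm_num, Real.Gamma_nat_eq_factorial,
    show ((7:ℕ):ℝ) + 1 = ((8:ℕ):ℝ) by norm_num, Real.rpow_natCast, div_pow, one_pow,
    show Nat.factorial 7 = 5040 from rfl]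
  push_cast
  field_simp

lemma gamma8_int {x : ℝ} (hx : 0 < x) :
    IntegrableOn (fun t : ℝ => t ^ 7 * Real.exp (-(x*t))) (Ioi 0) := by
  have h := integrableOn_rpow_mul_exp_neg_mul_rpow (p := 1) (s := 7) (b := x)
    (by norm_num) zero_lt_one hx
  refine h.congr_fun (fun t ht => ?_) measurableSet_Ioi
  beta_reduce
  rw [Real.rpow_one, show (7:ℝ) = ((7:ℕ):ℝ) by norm_num, Real.rpow_natCast]
  ring_nf


lemma lapCos_int {t : ℝ} (ht : 0 < t) (b : ℝ) :
    IntegrableOn (fun x : ℝ => Real.exp (-(x*t)) * Real.cos (b*x)) (Ioi 0) := by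
  refine (exp_neg_integrableOn_Ioi 0 ht).mono' ?_ ?_
  · exact ((Real.continuous_exp.comp (continuous_id.mul continuous_const).neg).mul
      (Real.continuous_cos.comp (continuous_const.mul continuous_id))).aestronglyMeasurable
  · filter_upwards with x
    rw [norm_eq_abs, abs_mul, Real.abs_exp, show -t*x = -(x*t) by ring]
    calc Real.exp (-(x*t)) * |Real.cos (b*x)| ≤ Real.exp (-(x*t)) * 1 := by
          gcongr; exact Real.abs_cos_le_one _
      _ = Real.exp (-(x*t)) := mul_one _

lemma lapCos {t : ℝ} (ht : 0 < t) (b : ℝ) :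
    ∫ x in Ioi (0:ℝ), Real.exp (-(x*t)) * Real.cos (b*x) = t / (t^2 + b^2) := by
  have hc : (0:ℝ) < t^2 + b^2 := by positivity
  set f : ℝ → ℝ := fun x => Real.exp (-(x*t)) * (b * Real.sin (b*x) - t * Real.cos (b*x)) / (t^2 + b^2) with hf
  have hderiv : ∀ x ∈ Ici (0:ℝ), HasDerivAt f (Real.exp (-(x*t)) * Real.cos (b*x)) x := by
    intro x _
    have he : HasDerivAt (fun x : ℝ => Real.exp (-(x*t))) (Real.exp (-(x*t)) * (-(1*t))) x :=
      (((hasDerivAt_id x).mul_const t).neg).exp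
    have hs : HasDerivAt (fun x : ℝ => Real.sin (b*x)) (Real.cos (b*x) * (b*1)) x :=
      ((hasDerivAt_id x).const_mul b).sin
    have hcx : HasDerivAt (fun x : ℝ => Real.cos (b*x)) (-Real.sin (b*x) * (b*1)) x :=
      ((hasDerivAt_id x).const_mul b).cos
    have h2 : HasDerivAt (fun x : ℝ => b * Real.sin (b*x) - t * Real.cos (b*x))
        (b * (Real.cos (b*x) * (b*1)) - t * (-Real.sin (b*x) * (b*1))) x :=
      (hs.const_mul b).sub (hcx.const_mul t)
    have := (he.mul h2).div_const (t^2 + b^2)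
    refine this.congr_deriv ?_
    field_simp
    ring
  have hbd : ∀ x : ℝ, ‖f x‖ ≤ Real.exp (-(x*t)) * (|b| + |t|) / (t^2+b^2) := by
    intro x
    rw [hf, norm_eq_abs, abs_div, abs_mul, Real.abs_exp, abs_of_pos hc]
    gcongr
    calc |b * Real.sin (b*x) - t * Real.cos (b*x)| ≤ |b * Real.sin (b*x)| + |t * Real.cos (b*x)| :=
          abs_sub _ _
      _ ≤ |b| + |t| := by
          rw [abs_mul, abs_mul]
          have h1 := Real.abs_sin_le_one (b*x)
          have h2 := Real.abs_cos_le_one (b*x)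
          have := abs_nonneg b
          have := abs_nonneg t
          nlinarith
  have hexp : Tendsto (fun x : ℝ => Real.exp (-(x*t))) atTop (nhds 0) := by
    have h1 : Tendsto (fun x : ℝ => x * t) atTop atTop :=
      Tendsto.atTop_mul_const ht tendsto_id
    exact Real.tendsto_exp_atBot.comp (tendsto_neg_atBot_iff.mpr h1)
  have htend : Tendsto f atTop (nhds 0) := by
    refine squeeze_zero_norm hbd ?_
    simpa using (hexp.mul_const (|b| + |t|)).div_const (t^2+b^2)
  have := integral_Ioi_of_hasDerivAt_of_tendsto' hderiv (lapCos_int ht b) htend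
  rw [this, hf]
  simp [Real.sin_zero, Real.cos_zero]
  field_simp

lemma invsq_int {a : ℝ} (ha : 1 ≤ a) :
    IntegrableOn (fun t : ℝ => (a^2 + t^2)⁻¹) (Ioi 0) := by
  have ha0 : (0:ℝ) < a := lt_of_lt_of_le one_pos ha
  refine (integrable_inv_one_add_sq.integrableOn (s := Ioi 0)).mono' ?_ ?_
  · exact (continuous_const.add (continuous_id.pow 2)).inv₀
      (fun t => by simp only [Pi.add_apply, Pi.pow_apply, id]; positivity) |>.aestronglyMeasurable
  · filter_upwards with t
    rw [norm_eq_abs, abs_of_pos (by positivity)]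
    have h1 : (0:ℝ) < 1 + t^2 := by positivity
    gcongr
    nlinarith

lemma invsq_val {a : ℝ} (ha : 1 ≤ a) :
    ∫ t in Ioi (0:ℝ), (a^2 + t^2)⁻¹ = π / (2*a) := by
  have ha0 : (0:ℝ) < a := lt_of_lt_of_le one_pos ha
  have hderiv : ∀ t ∈ Ici (0:ℝ), HasDerivAt (fun t => (1/a) * Real.arctan (t/a)) ((a^2 + t^2)⁻¹) t := by
    intro t _
    have h1 : HasDerivAt (fun t : ℝ => t/a) (1/a) t := (hasDerivAt_id t).div_const a
    have h2 := (Real.hasDerivAt_arctan (t/a)).comp t h1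
    have h3 := h2.const_mul (1/a)
    refine h3.congr_deriv ?_
    field_simp
  have htend : Tendsto (fun t : ℝ => (1/a) * Real.arctan (t/a)) atTop (nhds ((1/a) * (π/2))) := by
    refine Tendsto.const_mul _ ?_
    refine (tendsto_nhds_of_tendsto_nhdsWithin Real.tendsto_arctan_atTop).comp ?_
    exact Tendsto.atTop_div_const ha0 tendsto_id
  have := integral_Ioi_of_hasDerivAt_of_tendsto' hderiv (invsq_int ha) htend
  rw [this]
  simp [Real.arctan_zero]
  ring

lemma lapSin8_fun (t : ℝ) : (fun x : ℝ => Real.exp (-(x*t)) * Real.sin x ^ 8) = fun x =>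
    (35/128) * (Real.exp (-(x*t)) * Real.cos (0*x)) + (-56/128) * (Real.exp (-(x*t)) * Real.cos (2*x))
    + (28/128) * (Real.exp (-(x*t)) * Real.cos (4*x)) + (-8/128) * (Real.exp (-(x*t)) * Real.cos (6*x))
    + (1/128) * (Real.exp (-(x*t)) * Real.cos (8*x)) := by
  funext x
  rw [sin_pow_eight_eq x, zero_mul, Real.cos_zero]
  ring

lemma lapSin8_int {t : ℝ} (ht : 0 < t) :
    IntegrableOn (fun x : ℝ => Real.exp (-(x*t)) * Real.sin x ^ 8) (Ioi 0) := by
  rw [lapSin8_fun t]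
  exact (((((lapCos_int ht 0).const_mul _).add ((lapCos_int ht 2).const_mul _)).add
    ((lapCos_int ht 4).const_mul _)).add ((lapCos_int ht 6).const_mul _)).add
    ((lapCos_int ht 8).const_mul _)

lemma lapSin8 {t : ℝ} (ht : 0 < t) :
    ∫ x in Ioi (0:ℝ), Real.exp (-(x*t)) * Real.sin x ^ 8 =
      (35/128) * (t/(t^2+0^2)) + (-56/128) * (t/(t^2+2^2)) + (28/128) * (t/(t^2+4^2))
      + (-8/128) * (t/(t^2+6^2)) + (1/128) * (t/(t^2+8^2)) := by
  have i0 := (lapCos_int ht 0).const_mul (35/128 : ℝ)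
  have i2 := (lapCos_int ht 2).const_mul (-56/128 : ℝ)
  have i4 := (lapCos_int ht 4).const_mul (28/128 : ℝ)
  have i6 := (lapCos_int ht 6).const_mul (-8/128 : ℝ)
  have i8 := (lapCos_int ht 8).const_mul (1/128 : ℝ)
  have j2 : Integrable (fun x : ℝ => 35/128 * (Real.exp (-(x*t)) * Real.cos (0*x)) + -56/128 * (Real.exp (-(x*t)) * Real.cos (2*x))) (volume.restrict (Ioi 0)) := i0.add i2
  have j4 : Integrable (fun x : ℝ => 35/128 * (Real.exp (-(x*t)) * Real.cos (0*x)) + -56/128 * (Real.exp (-(x*t)) * Real.cos (2*x)) + 28/128 * (Real.exp (-(x*t)) * Real.cos (4*x))) (volume.restrict (Ioi 0)) := j2.add i4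
  have j6 : Integrable (fun x : ℝ => 35/128 * (Real.exp (-(x*t)) * Real.cos (0*x)) + -56/128 * (Real.exp (-(x*t)) * Real.cos (2*x)) + 28/128 * (Real.exp (-(x*t)) * Real.cos (4*x)) + -8/128 * (Real.exp (-(x*t)) * Real.cos (6*x))) (volume.restrict (Ioi 0)) := j4.add i6
  rw [lapSin8_fun t]
  simp only [integral_add j6 i8, integral_add j4 i6, integral_add j2 i4, integral_add i0 i2,
    integral_const_mul]
  rw [lapCos ht 0, lapCos ht 2, lapCos ht 4, lapCos ht 6, lapCos ht 8]

lemma lapval {t : ℝ} (ht : 0 < t) :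
    ∫ x in Ioi (0:ℝ), t^7 * Real.exp (-(x*t)) * Real.sin x ^ 8 =
      -112 * ((2:ℝ)^2 + t^2)⁻¹ + 14336 * ((4:ℝ)^2 + t^2)⁻¹
      + -104976 * ((6:ℝ)^2 + t^2)⁻¹ + 131072 * ((8:ℝ)^2 + t^2)⁻¹ := by
  have h1 : (fun x : ℝ => t^7 * Real.exp (-(x*t)) * Real.sin x ^ 8)
      = fun x : ℝ => t^7 * (Real.exp (-(x*t)) * Real.sin x ^ 8) := by funext x; ring
  rw [h1, integral_const_mul, lapSin8 ht]
  have h2 : t^2 + 2^2 ≠ 0 := by positivity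
  have h4 : t^2 + 4^2 ≠ 0 := by positivity
  have h6 : t^2 + 6^2 ≠ 0 := by positivity
  have h8 : t^2 + 8^2 ≠ 0 := by positivity
  have h0 : t^2 + 0^2 ≠ 0 := by positivity
  field_simp
  ring

lemma lapval_int {t : ℝ} (ht : 0 < t) :
    IntegrableOn (fun x : ℝ => t^7 * Real.exp (-(x*t)) * Real.sin x ^ 8) (Ioi 0) := by
  have := (lapSin8_int ht).const_mul (t^7)
  simp only [← mul_assoc] at this
  exact this

lemma Rval_int : IntegrableOn (fun t : ℝ =>
    -112 * ((2:ℝ)^2 + t^2)⁻¹ + 14336 * ((4:ℝ)^2 + t^2)⁻¹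
      + -104976 * ((6:ℝ)^2 + t^2)⁻¹ + 131072 * ((8:ℝ)^2 + t^2)⁻¹) (Ioi 0) :=
  ((((invsq_int (by norm_num : (1:ℝ) ≤ 2)).const_mul (-112)).add
    ((invsq_int (by norm_num : (1:ℝ) ≤ 4)).const_mul 14336)).add
    ((invsq_int (by norm_num : (1:ℝ) ≤ 6)).const_mul (-104976))).add
    ((invsq_int (by norm_num : (1:ℝ) ≤ 8)).const_mul 131072)

lemma Rval : ∫ t in Ioi (0:ℝ),
    (-112 * ((2:ℝ)^2 + t^2)⁻¹ + 14336 * ((4:ℝ)^2 + t^2)⁻¹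
      + -104976 * ((6:ℝ)^2 + t^2)⁻¹ + 131072 * ((8:ℝ)^2 + t^2)⁻¹) = 1208 * π := by
  have i2 := (invsq_int (by norm_num : (1:ℝ) ≤ 2)).const_mul (-112 : ℝ)
  have i4 := (invsq_int (by norm_num : (1:ℝ) ≤ 4)).const_mul (14336 : ℝ)
  have i6 := (invsq_int (by norm_num : (1:ℝ) ≤ 6)).const_mul (-104976 : ℝ)
  have i8 := (invsq_int (by norm_num : (1:ℝ) ≤ 8)).const_mul (131072 : ℝ)
  have j4 : Integrable (fun t : ℝ => -112 * ((2:ℝ)^2 + t^2)⁻¹ + 14336 * ((4:ℝ)^2 + t^2)⁻¹)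
      (volume.restrict (Ioi 0)) := i2.add i4
  have j6 : Integrable (fun t : ℝ => -112 * ((2:ℝ)^2 + t^2)⁻¹ + 14336 * ((4:ℝ)^2 + t^2)⁻¹
      + -104976 * ((6:ℝ)^2 + t^2)⁻¹) (volume.restrict (Ioi 0)) := j4.add i6
  simp only [integral_add j6 i8, integral_add j4 i6, integral_add i2 i4, integral_const_mul]
  rw [invsq_val (by norm_num : (1:ℝ) ≤ 2), invsq_val (by norm_num : (1:ℝ) ≤ 4),
    invsq_val (by norm_num : (1:ℝ) ≤ 6), invsq_val (by norm_num : (1:ℝ) ≤ 8)]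
  ring

/-- `∫₀^∞ sin⁸ x / x⁸ dx = 151π / 630` (as an absolutely convergent Lebesgue integral). -/
theorem integral_sin_pow_eight_div_pow_eight :
    IntegrableOn (fun x : ℝ => Real.sin x ^ 8 / x ^ 8) (Set.Ioi 0) ∧
    ∫ x in Set.Ioi (0:ℝ), Real.sin x ^ 8 / x ^ 8 = 151 * π / 630 := by
  have hmeasF : AEMeasurable (Function.uncurry fun x t : ℝ =>
      ENNReal.ofReal (t^7 * Real.exp (-(x*t)) * Real.sin x ^ 8))
      ((volume.restrict (Ioi 0)).prod (volume.restrict (Ioi 0))) := by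
    apply Measurable.aemeasurable
    apply Measurable.ennreal_ofReal
    fun_prop
  have hswap := lintegral_lintegral_swap hmeasF
  have hL : ∫⁻ x in Ioi (0:ℝ), ∫⁻ t in Ioi (0:ℝ),
      ENNReal.ofReal (t^7 * Real.exp (-(x*t)) * Real.sin x ^ 8) =
      ∫⁻ x in Ioi (0:ℝ), ENNReal.ofReal (5040 * (Real.sin x ^ 8 / x ^ 8)) := by
    refine setLIntegral_congr_fun measurableSet_Ioi ?_
    intro x hx
    beta_reduce
    have hint : IntegrableOn (fun t : ℝ => t^7 * Real.exp (-(x*t)) * Real.sin x ^ 8) (Ioi 0) :=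
      (gamma8_int hx).mul_const _
    have hnn : 0 ≤ᵐ[volume.restrict (Ioi (0:ℝ))]
        fun t : ℝ => t^7 * Real.exp (-(x*t)) * Real.sin x ^ 8 := by
      filter_upwards [ae_restrict_mem measurableSet_Ioi] with t htt
      have : (0:ℝ) < t := htt
      positivity
    rw [← ofReal_integral_eq_lintegral_ofReal hint hnn, integral_mul_const, gamma8 hx]
    congr 1
    field_simp
  have hR : ∫⁻ t in Ioi (0:ℝ), ∫⁻ x in Ioi (0:ℝ),
      ENNReal.ofReal (t^7 * Real.exp (-(x*t)) * Real.sin x ^ 8) =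
      ∫⁻ t in Ioi (0:ℝ), ENNReal.ofReal
        (-112 * ((2:ℝ)^2 + t^2)⁻¹ + 14336 * ((4:ℝ)^2 + t^2)⁻¹
          + -104976 * ((6:ℝ)^2 + t^2)⁻¹ + 131072 * ((8:ℝ)^2 + t^2)⁻¹) := by
    refine setLIntegral_congr_fun measurableSet_Ioi ?_
    intro t ht
    beta_reduce
    have hnn : 0 ≤ᵐ[volume.restrict (Ioi (0:ℝ))]
        fun x : ℝ => t^7 * Real.exp (-(x*t)) * Real.sin x ^ 8 := by
      filter_upwards with x
      have : (0:ℝ) < t := ht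
      positivity
    rw [← ofReal_integral_eq_lintegral_ofReal (lapval_int ht) hnn, lapval ht]
  have hRnn : 0 ≤ᵐ[volume.restrict (Ioi (0:ℝ))] fun t : ℝ =>
      -112 * ((2:ℝ)^2 + t^2)⁻¹ + 14336 * ((4:ℝ)^2 + t^2)⁻¹
        + -104976 * ((6:ℝ)^2 + t^2)⁻¹ + 131072 * ((8:ℝ)^2 + t^2)⁻¹ := by
    filter_upwards [ae_restrict_mem measurableSet_Ioi] with t ht
    have ht' : (0:ℝ) < t := ht
    rw [← lapval ht']
    refine setIntegral_nonneg measurableSet_Ioi (fun x hx => ?_)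
    positivity
  have key : ∫⁻ x in Ioi (0:ℝ), ENNReal.ofReal (5040 * (Real.sin x ^ 8 / x ^ 8)) =
      ENNReal.ofReal (1208 * π) := by
    rw [← hL, hswap, hR, ← ofReal_integral_eq_lintegral_ofReal Rval_int hRnn, Rval]
  have hnn2 : 0 ≤ᵐ[volume.restrict (Ioi (0:ℝ))]
      fun x : ℝ => 5040 * (Real.sin x ^ 8 / x ^ 8) := by
    filter_upwards with x
    positivity
  have hmeas2 : AEStronglyMeasurable (fun x : ℝ => 5040 * (Real.sin x ^ 8 / x ^ 8))
      (volume.restrict (Ioi 0)) := by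
    exact (((Real.measurable_sin.pow_const 8).div (measurable_id.pow_const 8)).const_mul
      5040).aestronglyMeasurable
  have hInt5040 : IntegrableOn (fun x : ℝ => 5040 * (Real.sin x ^ 8 / x ^ 8)) (Ioi 0) :=
    ⟨hmeas2, (hasFiniteIntegral_iff_ofReal hnn2).mpr (key ▸ ENNReal.ofReal_lt_top)⟩
  have hval5040 : ∫ x in Ioi (0:ℝ), 5040 * (Real.sin x ^ 8 / x ^ 8) = 1208 * π := by
    rw [integral_eq_lintegral_of_nonneg_ae hnn2 hmeas2, key,
      ENNReal.toReal_ofReal (by positivity)]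
  have heq : (fun x : ℝ => Real.sin x ^ 8 / x ^ 8)
      = fun x : ℝ => (1/5040) * (5040 * (Real.sin x ^ 8 / x ^ 8)) := by funext x; ring
  constructor
  · rw [heq]; exact hInt5040.const_mul _
  · rw [heq, integral_const_mul, hval5040]; ring

end Aux
end

section
/- Let α be a real number that is not an integer multiple of π. For every real x, one has 1 − sin x / sin α = (1 − x/α) · ∏_{n=1}^∞ (1 − x/((2n−1)π − α)) (1 + x/((2n−1)π + α)) (1 − x/(2nπ + α)) (1 + x/(2nπ − α)), where the infinite product converges. -/
open Real Filter Finset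

private lemma hasProd_succ {f : ℕ → ℝ} {a : ℝ} (h : HasProd (fun n => f (n + 1)) a) :
    HasProd f (a * f 0) := by
  have e1 : (Function.update f 0 1 ∘ Nat.succ) = (fun n => f (n + 1)) := by
    funext n; simp [Function.comp, Function.update_apply]
  have h2 : HasProd (Function.update f 0 1) a := by
    rw [← Function.Injective.hasProd_iff Nat.succ_injective]
    · rw [e1]; exact h
    · intro x hx
      have hx0 : x = 0 := by
        rcases x with _ | y
        · rfl
        · exact absurd ⟨y, rfl⟩ hx
      subst hx0; simp
  have h3 : HasProd (fun n : ℕ => if n = 0 then f 0 else 1) ((fun n : ℕ => if n = 0 then f 0 else 1) 0) :=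
    hasProd_single 0 (fun b hb => by simp [hb])
  have h4 := h2.mul h3
  have e2 : (fun b => Function.update f 0 1 b * if b = 0 then f 0 else 1) = f := by
    funext n
    rcases eq_or_ne n 0 with rfl | hn
    · simp
    · simp [Function.update_apply, hn]
  rw [e2] at h4
  simpa using h4

private lemma hasProd_shift {f : ℕ → ℝ} {a : ℝ} (k : ℕ)
    (h : HasProd (fun n => f (n + k)) a) :
    HasProd f (a * ∏ i ∈ Finset.range k, f i) := by
  induction k generalizing f a with
  | zero => simpa using h
  | succ k ih =>
    have h' : HasProd (fun n => (fun m => f (m + 1)) (n + k)) a := h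
    have h2 := hasProd_succ (ih h')
    rw [Finset.prod_range_succ', ← mul_assoc]
    exact h2

private lemma hasProd_zero_of_eq_zero {f : ℕ → ℝ} (j : ℕ) (hj : f j = 0) : HasProd f 0 := by
  have : ∀ᶠ s : Finset ℕ in atTop, ∏ i ∈ s, f i = 0 := by
    filter_upwards [Filter.eventually_ge_atTop {j}] with s hs
    exact Finset.prod_eq_zero (hs (Finset.mem_singleton_self j)) hj
  exact Tendsto.congr' (Filter.EventuallyEq.symm this) tendsto_const_nhds

private lemma hasProd_inv' {b : ℕ → ℝ} {B : ℝ} (hb : HasProd b B) (hB : B ≠ 0) :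
    HasProd (fun n => (b n)⁻¹) B⁻¹ := by
  have := Filter.Tendsto.inv₀ hb hB
  refine this.congr fun s => ?_
  rw [← Finset.prod_inv_distrib]

private lemma hasProd_of_tendsto_of_multipliable {f : ℕ → ℝ} {a : ℝ} (hm : Multipliable f)
    (ht : Filter.Tendsto (fun N => ∏ n ∈ Finset.range N, f n) atTop (nhds a)) :
    HasProd f a := by
  have h1 := hm.hasProd
  have h2 := h1.tendsto_prod_nat
  have : a = ∏' n, f n := tendsto_nhds_unique ht h2
  rwa [this]

open Real Filter Finset

private lemma abs_log_one_add_le {t : ℝ} (h : |t| < 1/2) : |Real.log (1 + t)| ≤ 2 * |t| := by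
  have h1 : -(1/2) < t := by
    have := abs_lt.mp h; linarith [this.1]
  have h2 : t < 1/2 := (abs_lt.mp h).2
  have hpos : 0 < 1 + t := by linarith
  rcases le_or_gt 0 t with ht | ht
  · have hl1 : Real.log (1 + t) ≤ t := by
      have := Real.log_le_sub_one_of_pos hpos; linarith
    have hl2 : 0 ≤ Real.log (1 + t) := Real.log_nonneg (by linarith)
    rw [abs_of_nonneg hl2, abs_of_nonneg ht]; linarith
  · have hl2 : Real.log (1 + t) ≤ 0 := Real.log_nonpos (by linarith) (by linarith)
    have hinv : Real.log (1 + t) = - Real.log (1 + t)⁻¹ := by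
      rw [Real.log_inv]; ring
    have hb : Real.log (1 + t)⁻¹ ≤ (1 + t)⁻¹ - 1 :=
      Real.log_le_sub_one_of_pos (by positivity)
    have hb2 : (1 + t)⁻¹ - 1 = -t / (1 + t) := by field_simp; ring
    have hb3 : -t / (1 + t) ≤ 2 * (-t) := by
      rw [div_le_iff₀ hpos]; nlinarith
    rw [abs_of_nonpos hl2, abs_of_neg ht, hinv]
    rw [hb2] at hb; linarith [hb3, hb]

set_option maxHeartbeats 1000000 in
private lemma multipliable_one_add {g : ℕ → ℝ} (hg : Summable g) :
    Multipliable (fun n => 1 + g n) := by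
  by_cases hz : ∃ j, 1 + g j = 0
  · obtain ⟨j, hj⟩ := hz
    exact ⟨0, hasProd_zero_of_eq_zero j hj⟩
  push_neg at hz
  obtain ⟨N, hN⟩ : ∃ N, ∀ n ≥ N, |g n| < 1/2 := by
    have := Metric.tendsto_atTop.mp hg.tendsto_atTop_zero (1/2) (by norm_num)
    obtain ⟨N, hN⟩ := this
    exact ⟨N, fun n hn => by simpa [Real.dist_eq] using hN n hn⟩
  have hpos : ∀ n : ℕ, 0 < 1 + g (n + N) := by
    intro n
    have := hN (n + N) (Nat.le_add_left N n)
    have := (abs_lt.mp this).1; linarith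
  have hsl : Summable (fun n => Real.log (1 + g (n + N))) := by
    refine Summable.of_norm_bounded
      (((summable_nat_add_iff N).mpr hg).abs.mul_left 2) (fun n => ?_)
    rw [Real.norm_eq_abs]
    exact abs_log_one_add_le (hN (n + N) (Nat.le_add_left N n))
  have hp1 := hsl.hasSum.rexp
  have e1 : (rexp ∘ fun n => Real.log (1 + g (n + N))) = fun n => 1 + g (n + N) := by
    funext n; simp only [Function.comp]; exact Real.exp_log (hpos n)
  rw [e1] at hp1
  have := hasProd_shift (f := fun n => 1 + g n) N hp1
  exact ⟨_, this⟩

private lemma summable_base : Summable (fun n : ℕ => 1/((n:ℝ)+1)^2) := by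
  have h := (summable_one_div_nat_pow (p := 2)).mpr one_lt_two
  have := (summable_nat_add_iff 1).mpr h
  refine this.congr fun n => ?_
  push_cast; ring

private lemma summable_sinfac (y : ℝ) :
    Summable (fun n : ℕ => -(y^2/(((n:ℝ)+1)^2*π^2))) := by
  have := summable_base.mul_left (-(y^2/π^2))
  refine this.congr fun n => ?_
  rw [neg_mul, mul_one_div, div_div, mul_comm (π^2)]

private lemma summable_cosfac (y : ℝ) :
    Summable (fun n : ℕ => -(4*y^2/((2*(n:ℝ)+1)^2*π^2))) := by
  refine Summable.of_abs ?_
  refine Summable.of_nonneg_of_le (fun n => abs_nonneg _)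
    (fun n => ?_) (summable_base.mul_left (4*y^2/π^2))
  have h1 : |(-(4*y^2/((2*(n:ℝ)+1)^2*π^2)))| = 4*y^2/((2*(n:ℝ)+1)^2*π^2) := by
    rw [abs_neg, abs_of_nonneg (by positivity)]
  rw [h1]
  have h2 : 4*y^2/π^2 * (1/((n:ℝ)+1)^2) = 4*y^2/(((n:ℝ)+1)^2*π^2) := by
    rw [mul_one_div, div_div, mul_comm (π^2)]
  rw [h2]
  have h3 : ((n:ℝ)+1)^2 ≤ (2*(n:ℝ)+1)^2 := by
    nlinarith [sq_nonneg ((n:ℝ)), Nat.cast_nonneg (α := ℝ) n]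
  exact div_le_div_of_nonneg_left (by positivity) (by positivity)
    (mul_le_mul_of_nonneg_right h3 (sq_nonneg π))


private lemma sinProd (y : ℝ) :
    ∃ L, HasProd (fun n : ℕ => 1 - y^2/(((n:ℝ)+1)^2*π^2)) L ∧ y * L = Real.sin y := by
  have hπ : (π:ℝ) ≠ 0 := Real.pi_ne_zero
  have hm : Multipliable (fun n : ℕ => 1 - y^2/(((n:ℝ)+1)^2*π^2)) := by
    refine (multipliable_one_add (summable_sinfac y)).congr fun n => ?_
    ring
  by_cases hy : y = 0
  · subst hy
    refine ⟨1, ?_, by simp⟩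
    have e : (fun n : ℕ => 1 - (0:ℝ)^2/(((n:ℝ)+1)^2*π^2)) = fun _ => (1:ℝ) := by
      funext n; simp
    rw [e]; exact hasProd_one
  · have ht := Real.tendsto_euler_sin_prod (y/π)
    have e : π * (y/π) = y := by field_simp
    rw [e] at ht
    have efac : ∀ j : ℕ, 1 - (y/π)^2/((j:ℝ)+1)^2 = 1 - y^2/(((j:ℝ)+1)^2*π^2) := by
      intro j; rw [div_pow, div_div, mul_comm]
    simp only [efac] at ht
    have ht2 := ht.const_mul y⁻¹
    have e2 : (fun n : ℕ => y⁻¹ * (y * ∏ j ∈ Finset.range n, (1 - y^2/(((j:ℝ)+1)^2*π^2))))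
        = fun n : ℕ => ∏ j ∈ Finset.range n, (1 - y^2/(((j:ℝ)+1)^2*π^2)) := by
      funext n; rw [inv_mul_cancel_left₀ hy]
    rw [e2] at ht2
    exact ⟨y⁻¹ * Real.sin y, hasProd_of_tendsto_of_multipliable hm ht2,
      by rw [mul_inv_cancel_left₀ hy]⟩

private lemma odd_real_ne_zero (j : ℤ) : (2*(j:ℝ)+1) ≠ 0 := by
  have e : (2*(j:ℝ)+1) = ((2*j+1 : ℤ) : ℝ) := by push_cast; ring
  rw [e]
  exact_mod_cast (by omega : (2*j+1 : ℤ) ≠ 0)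

private lemma cos_partial (m : ℕ) (N : ℕ) :
    ∏ n ∈ Finset.range N, (1 - 4*(m:ℝ)^2/(2*(n:ℝ)+1)^2)
      = (-1)^m * ∏ i ∈ Finset.range m, ((2*(N:ℝ)+2*(i:ℝ)+1)/(2*(N:ℝ)-2*(i:ℝ)-1)) := by
  induction N with
  | zero =>
    simp only [Finset.range_zero, Finset.prod_empty, Nat.cast_zero]
    have e : ∀ i ∈ Finset.range m, ((2*(0:ℝ)+2*(i:ℝ)+1)/(2*(0:ℝ)-2*(i:ℝ)-1)) = -1 := by
      intro i _
      have hne : (2*(i:ℝ)+1) ≠ 0 := by positivity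
      have e2 : (2*(0:ℝ)-2*(i:ℝ)-1) = -(2*(i:ℝ)+1) := by ring
      have e3 : (2*(0:ℝ)+2*(i:ℝ)+1) = (2*(i:ℝ)+1) := by ring
      rw [e2, e3, div_neg, div_self hne]
    rw [Finset.prod_congr rfl e, Finset.prod_const, Finset.card_range, ← mul_pow]
    norm_num
  | succ N ih =>
    rw [Finset.prod_range_succ, ih]
    rw [mul_assoc]
    congr 1
    -- goal: Q N * (1 - 4m²/(2N+1)²) = Q (N+1)
    set A₀ : ℝ := ∏ i ∈ Finset.range m, (2*(N:ℝ)+2*(i:ℝ)+1) with hA₀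
    set B₀ : ℝ := ∏ i ∈ Finset.range m, (2*(N:ℝ)-2*(i:ℝ)-1) with hB₀
    set A₁ : ℝ := ∏ i ∈ Finset.range m, (2*((N+1:ℕ):ℝ)+2*(i:ℝ)+1) with hA₁
    set B₁ : ℝ := ∏ i ∈ Finset.range m, (2*((N+1:ℕ):ℝ)-2*(i:ℝ)-1) with hB₁
    have hBne : ∀ (M : ℕ) (i : ℕ), (2*(M:ℝ)-2*(i:ℝ)-1) ≠ 0 := by
      intro M i
      have e : (2*(M:ℝ)-2*(i:ℝ)-1) = (2*(((M:ℤ)-i-1 : ℤ):ℝ)+1) := by push_cast; ring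
      rw [e]; exact odd_real_ne_zero _
    have hB₀ne : B₀ ≠ 0 := Finset.prod_ne_zero_iff.mpr (fun i _ => hBne N i)
    have hB₁ne : B₁ ≠ 0 := Finset.prod_ne_zero_iff.mpr (fun i _ => hBne (N+1) i)
    have h2N1 : (2*(N:ℝ)+1) ≠ 0 := by positivity
    have hodd : (2*(N:ℝ)+1-2*(m:ℝ)) ≠ 0 := by
      have e : (2*(N:ℝ)+1-2*(m:ℝ)) = (2*(((N:ℤ)-m : ℤ):ℝ)+1) := by push_cast; ring
      rw [e]; exact odd_real_ne_zero _
    have relA : A₁ * (2*(N:ℝ)+1) = A₀ * (2*(N:ℝ)+2*(m:ℝ)+1) := by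
      have e1 : A₁ = ∏ i ∈ Finset.range m, (fun i : ℕ => 2*(N:ℝ)+2*(i:ℝ)+1) (i+1) := by
        rw [hA₁]; refine Finset.prod_congr rfl fun i _ => ?_; push_cast; ring
      have e2 := Finset.prod_range_succ' (fun i : ℕ => 2*(N:ℝ)+2*(i:ℝ)+1) m
      have e3 := Finset.prod_range_succ (fun i : ℕ => 2*(N:ℝ)+2*(i:ℝ)+1) m
      rw [e1]
      have : (∏ i ∈ Finset.range m, (fun i : ℕ => 2*(N:ℝ)+2*(i:ℝ)+1) (i+1)) * (2*(N:ℝ)+1)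
          = ∏ k ∈ Finset.range (m+1), (2*(N:ℝ)+2*(k:ℝ)+1) := by
        rw [e2]; norm_num
      rw [this, e3]
    have relB : B₀ * (2*(N:ℝ)+1) = B₁ * (2*(N:ℝ)+1-2*(m:ℝ)) := by
      have e1 : B₀ = ∏ i ∈ Finset.range m, (fun i : ℕ => 2*(N:ℝ)+1-2*(i:ℝ)) (i+1) := by
        rw [hB₀]; refine Finset.prod_congr rfl fun i _ => ?_; push_cast; ring
      have e1' : B₁ = ∏ i ∈ Finset.range m, (fun i : ℕ => 2*(N:ℝ)+1-2*(i:ℝ)) i := by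
        rw [hB₁]; refine Finset.prod_congr rfl fun i _ => ?_; push_cast; ring
      have e2 := Finset.prod_range_succ' (fun i : ℕ => 2*(N:ℝ)+1-2*(i:ℝ)) m
      have e3 := Finset.prod_range_succ (fun i : ℕ => 2*(N:ℝ)+1-2*(i:ℝ)) m
      rw [e1, e1']
      have : (∏ i ∈ Finset.range m, (fun i : ℕ => 2*(N:ℝ)+1-2*(i:ℝ)) (i+1)) * (2*(N:ℝ)+1)
          = ∏ k ∈ Finset.range (m+1), (2*(N:ℝ)+1-2*(k:ℝ)) := by
        rw [e2]; norm_num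
      rw [this, e3]
    have key : A₁ * (2*(N:ℝ)+1) * (B₀ * (2*(N:ℝ)+1))
        = A₀ * (2*(N:ℝ)+2*(m:ℝ)+1) * (B₁ * (2*(N:ℝ)+1-2*(m:ℝ))) := by
      rw [relA, relB]
    have eQ : ∀ (M : ℕ), (∏ i ∈ Finset.range m, ((2*(M:ℝ)+2*(i:ℝ)+1)/(2*(M:ℝ)-2*(i:ℝ)-1)))
        = (∏ i ∈ Finset.range m, (2*(M:ℝ)+2*(i:ℝ)+1)) / (∏ i ∈ Finset.range m, (2*(M:ℝ)-2*(i:ℝ)-1)) :=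
      fun M => Finset.prod_div_distrib _ _
    rw [eQ N, eQ (N+1)]
    rw [← hA₀, ← hB₀, ← hA₁, ← hB₁]
    rw [div_mul_eq_mul_div, div_eq_div_iff hB₀ne hB₁ne]
    field_simp
    linear_combination -key

private lemma tendsto_correction (m : ℕ) :
    Filter.Tendsto (fun N : ℕ => ∏ i ∈ Finset.range m, ((2*(N:ℝ)+2*(i:ℝ)+1)/(2*(N:ℝ)-2*(i:ℝ)-1)))
      atTop (nhds 1) := by
  have h1 : (1:ℝ) = ∏ i ∈ Finset.range m, (1:ℝ) := by simp
  rw [h1]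
  refine tendsto_finset_prod _ fun i _ => ?_
  have hden : Filter.Tendsto (fun N : ℕ => 2*(N:ℝ)-2*(i:ℝ)-1) atTop atTop := by
    have h2 : Filter.Tendsto (fun N : ℕ => 2*(N:ℝ)) atTop atTop :=
      (tendsto_natCast_atTop_atTop (R := ℝ)).const_mul_atTop two_pos
    have h4 := tendsto_atTop_add_const_right atTop (-2*(i:ℝ)-1) h2
    exact h4.congr fun N => by ring
  have hinv : Filter.Tendsto (fun N : ℕ => (4*(i:ℝ)+2) * (2*(N:ℝ)-2*(i:ℝ)-1)⁻¹) atTop (nhds 0) := by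
    have := hden.inv_tendsto_atTop
    have h3 := this.const_mul (4*(i:ℝ)+2)
    simpa using h3
  have hsum : Filter.Tendsto (fun N : ℕ => 1 + (4*(i:ℝ)+2) * (2*(N:ℝ)-2*(i:ℝ)-1)⁻¹) atTop (nhds 1) := by
    have h5 := hinv.const_add (1:ℝ)
    simpa using h5
  refine hsum.congr fun N => ?_
  have hne : (2*(N:ℝ)-2*(i:ℝ)-1) ≠ 0 := by
    have e : (2*(N:ℝ)-2*(i:ℝ)-1) = (2*(((N:ℤ)-i-1 : ℤ):ℝ)+1) := by push_cast; ring
    rw [e]; exact odd_real_ne_zero _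
  simp only [Finset.prod_const_one]
  rw [eq_div_iff hne, add_mul, inv_mul_cancel_right₀ hne]
  ring

private lemma neg_one_zpow_eq_natAbs (k : ℤ) : ((-1:ℝ)) ^ k = (-1:ℝ) ^ k.natAbs := by
  rcases Int.natAbs_eq k with h | h
  · conv_lhs => rw [h]
    rw [zpow_natCast]
  · conv_lhs => rw [h]
    rw [zpow_neg, zpow_natCast, ← inv_pow, inv_neg, inv_one]

private lemma cosProd (y : ℝ) :
    HasProd (fun n : ℕ => 1 - 4*y^2/((2*(n:ℝ)+1)^2*π^2)) (Real.cos y) := by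
  have hπ : (π:ℝ) ≠ 0 := Real.pi_ne_zero
  have hm : Multipliable (fun n : ℕ => 1 - 4*y^2/((2*(n:ℝ)+1)^2*π^2)) := by
    refine (multipliable_one_add (summable_cosfac y)).congr fun n => ?_
    ring
  obtain ⟨C, hC⟩ := hm
  by_cases hs : Real.sin y = 0
  · -- y = k * π
    obtain ⟨k, hk⟩ := Real.sin_eq_zero_iff.mp hs
    set m := k.natAbs with hmdef
    have hy2 : y^2 = (m:ℝ)^2 * π^2 := by
      rw [← hk]
      have : ((m:ℝ))^2 = ((k:ℝ))^2 := by
        rw [hmdef]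
        push_cast [Nat.cast_natAbs]
        rw [sq_abs]
      rw [this]; ring
    have efac : (fun n : ℕ => 1 - 4*y^2/((2*(n:ℝ)+1)^2*π^2))
        = fun n : ℕ => 1 - 4*(m:ℝ)^2/(2*(n:ℝ)+1)^2 := by
      funext n
      rw [hy2]
      congr 1
      rw [show 4*((m:ℝ)^2*π^2) = (4*(m:ℝ)^2)*π^2 from by ring]
      rw [mul_div_mul_right _ _ (by positivity : (π:ℝ)^2 ≠ 0)]
    have hcos : Real.cos y = (-1:ℝ)^m := by
      rw [← hk]
      have := Real.cos_add_int_mul_pi 0 k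
      simp only [zero_add, Real.cos_zero, mul_one] at this
      rw [this, neg_one_zpow_eq_natAbs]
    have ht : Filter.Tendsto (fun N : ℕ => ∏ n ∈ Finset.range N, (1 - 4*(m:ℝ)^2/(2*(n:ℝ)+1)^2))
        atTop (nhds ((-1:ℝ)^m)) := by
      have h2 : Filter.Tendsto (fun N : ℕ => (-1:ℝ)^m *
          ∏ i ∈ Finset.range m, ((2*(N:ℝ)+2*(i:ℝ)+1)/(2*(N:ℝ)-2*(i:ℝ)-1))) atTop (nhds ((-1:ℝ)^m * 1)) :=
        (tendsto_correction m).const_mul _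
      rw [mul_one] at h2
      exact h2.congr fun N => (cos_partial m N).symm
    rw [efac] at hC
    rw [efac, hcos]
    exact hasProd_of_tendsto_of_multipliable ⟨C, hC⟩ ht
  · -- sin y ≠ 0
    have hy : y ≠ 0 := fun h => hs (by rw [h, Real.sin_zero])
    obtain ⟨L, hL, hyL⟩ := sinProd y
    obtain ⟨L2, hL2, hyL2⟩ := sinProd (2*y)
    -- full product function at 2y
    set F : ℕ → ℝ := fun n => 1 - (2*y)^2/(((n:ℝ)+1)^2*π^2) with hF
    have he : (fun k : ℕ => F (2*k)) = fun n : ℕ => 1 - 4*y^2/((2*(n:ℝ)+1)^2*π^2) := by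
      funext k; rw [hF]; push_cast; ring_nf
    have ho : (fun k : ℕ => F (2*k+1)) = fun k : ℕ => 1 - y^2/(((k:ℝ)+1)^2*π^2) := by
      funext k
      rw [hF]
      push_cast
      have e1 : ((2*(k:ℝ)+1)+1)^2*π^2 = 4*((((k:ℝ)+1)^2)*π^2) := by ring
      rw [e1]
      have e2 : (2*y)^2 = 4*y^2 := by ring
      rw [e2, mul_div_mul_left _ _ (by norm_num : (4:ℝ) ≠ 0)]
    have hCe : HasProd (fun k : ℕ => F (2*k)) C := by rw [he]; exact hC
    have hLo : HasProd (fun k : ℕ => F (2*k+1)) L := by rw [ho]; exact hL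
    have hfull : HasProd F (C * L) := hCe.even_mul_odd hLo
    have huniq : C * L = L2 := hfull.unique hL2
    have hC_eq : C = Real.cos y := by
      have hL_ne : L ≠ 0 := by
        intro h0; rw [h0, mul_zero] at hyL; exact hs hyL.symm
      have h1 : 2*y*(C*L) = Real.sin (2*y) := by rw [huniq]; exact hyL2
      rw [Real.sin_two_mul, ← hyL] at h1
      -- 2*y*(C*L) = 2*(y*L)*cos y
      have h2 : (2*y*L) * C = (2*y*L) * Real.cos y := by ring_nf; ring_nf at h1; linarith [h1]
      have hyLne : 2*y*L ≠ 0 := by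
        intro h0
        rcases mul_eq_zero.mp h0 with h0 | h0
        · rcases mul_eq_zero.mp h0 with h0 | h0
          · norm_num at h0
          · exact hy h0
        · exact hL_ne h0
      exact mul_left_cancel₀ hyLne h2
    rw [← hC_eq]; exact hC


set_option maxHeartbeats 3000000 in
/-- Infinite product expansion of `1 - sin x / sin α`: for `α` not an integer multiple
of `π` and every real `x`,
`1 - sin x / sin α = (1 - x/α) ∏_{n=1}^∞ (1 - x/((2n-1)π - α))(1 + x/((2n-1)π + α))
  (1 - x/(2nπ + α))(1 + x/(2nπ - α))`, the infinite product being convergent. -/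
theorem one_sub_sin_div_sin_eq_prod (α : ℝ) (hα : ∀ k : ℤ, α ≠ k * π) (x : ℝ) :
    ∃ P : ℝ,
      HasProd
        (fun n : ℕ =>
          (1 - x / ((2 * ((n : ℝ) + 1) - 1) * π - α)) *
          (1 + x / ((2 * ((n : ℝ) + 1) - 1) * π + α)) *
          (1 - x / (2 * ((n : ℝ) + 1) * π + α)) *
          (1 + x / (2 * ((n : ℝ) + 1) * π - α))) P ∧
      1 - Real.sin x / Real.sin α = (1 - x / α) * P := by
  have hπ : (π:ℝ) ≠ 0 := Real.pi_ne_zero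
  have key : ∀ j : ℤ, α ≠ (j:ℝ) * π := fun j => hα j
  have hα0 : α ≠ 0 := by
    have := key 0; simpa using this
  -- nonvanishing of sin and cos at α/2 and α
  have hsinα : Real.sin α ≠ 0 := by
    intro h
    obtain ⟨k, hk⟩ := Real.sin_eq_zero_iff.mp h
    exact key k (by linarith)
  have hsinβ : Real.sin (α/2) ≠ 0 := by
    intro h
    obtain ⟨k, hk⟩ := Real.sin_eq_zero_iff.mp h
    refine key (2*k) ?_
    push_cast
    linarith
  have hcosβ : Real.cos (α/2) ≠ 0 := by
    intro h
    obtain ⟨k, hk⟩ := Real.cos_eq_zero_iff.mp h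
    refine key (2*k+1) ?_
    push_cast
    linarith
  -- the four basic products
  have cu := cosProd ((x+α)/2)
  have cβ := cosProd (α/2)
  obtain ⟨Lv, hLv, hvLv⟩ := sinProd ((x-α)/2)
  obtain ⟨Lβ, hLβ, hβLβ⟩ := sinProd (α/2)
  have hLβ_ne : Lβ ≠ 0 := by
    intro h0; rw [h0, mul_zero] at hβLβ; exact hsinβ hβLβ.symm
  -- nonvanishing of denominators
  have dcβ : ∀ n : ℕ, (1 - 4*(α/2)^2/((2*(n:ℝ)+1)^2*π^2)) ≠ 0 := by
    intro n h
    have hden : ((2*(n:ℝ)+1)^2*π^2) ≠ 0 := by positivity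
    have h2 : α^2 = ((2*(n:ℝ)+1)*π)^2 := by
      field_simp at h
      nlinarith [h]
    have h3 : α = (2*(n:ℝ)+1)*π ∨ α = -((2*(n:ℝ)+1)*π) := sq_eq_sq_iff_eq_or_eq_neg.mp h2
    rcases h3 with h3 | h3
    · exact key (2*n+1) (by push_cast; linarith)
    · exact key (-(2*n+1)) (by push_cast; linarith)
  have dsβ : ∀ n : ℕ, (1 - (α/2)^2/(((n:ℝ)+1)^2*π^2)) ≠ 0 := by
    intro n h
    have hden : (((n:ℝ)+1)^2*π^2) ≠ 0 := by positivity
    have h2 : α^2 = (2*((n:ℝ)+1)*π)^2 := by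
      field_simp at h
      nlinarith [h]
    have h3 : α = 2*((n:ℝ)+1)*π ∨ α = -(2*((n:ℝ)+1)*π) := sq_eq_sq_iff_eq_or_eq_neg.mp h2
    rcases h3 with h3 | h3
    · exact key (2*(n+1)) (by push_cast; linarith)
    · exact key (-(2*(n+1))) (by push_cast; linarith)
  -- combined product
  have r1 := cu.mul (hasProd_inv' cβ hcosβ)
  have r2 := hLv.mul (hasProd_inv' hLβ hLβ_ne)
  have r := r1.mul r2
  -- identify the function
  have hfun : (fun n : ℕ =>
      (1 - 4*((x+α)/2)^2/((2*(n:ℝ)+1)^2*π^2)) * (1 - 4*(α/2)^2/((2*(n:ℝ)+1)^2*π^2))⁻¹ *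
      ((1 - ((x-α)/2)^2/(((n:ℝ)+1)^2*π^2)) * (1 - (α/2)^2/(((n:ℝ)+1)^2*π^2))⁻¹))
      = (fun n : ℕ =>
          (1 - x / ((2 * ((n : ℝ) + 1) - 1) * π - α)) *
          (1 + x / ((2 * ((n : ℝ) + 1) - 1) * π + α)) *
          (1 - x / (2 * ((n : ℝ) + 1) * π + α)) *
          (1 + x / (2 * ((n : ℝ) + 1) * π - α))) := by
    funext n
    have a1 : (2 * ((n:ℝ) + 1) - 1) * π - α ≠ 0 := by
      intro h; exact key (2*n+1) (by push_cast; linarith)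
    have a2 : (2 * ((n:ℝ) + 1) - 1) * π + α ≠ 0 := by
      intro h; exact key (-(2*n+1)) (by push_cast; linarith)
    have a3 : 2 * ((n:ℝ) + 1) * π + α ≠ 0 := by
      intro h; exact key (-(2*(n+1))) (by push_cast; linarith)
    have a4 : 2 * ((n:ℝ) + 1) * π - α ≠ 0 := by
      intro h; exact key (2*(n+1)) (by push_cast; linarith)
    have b1 := dcβ n
    have b2 := dsβ n
    have hc : ((2*(n:ℝ)+1)^2*π^2) ≠ 0 := by positivity
    have hd : (((n:ℝ)+1)^2*π^2) ≠ 0 := by positivity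
    have e1 : (1 - x / ((2 * ((n:ℝ) + 1) - 1) * π - α)) * (1 + x / ((2 * ((n:ℝ) + 1) - 1) * π + α))
        = (1 - 4*((x+α)/2)^2/((2*(n:ℝ)+1)^2*π^2)) / (1 - 4*(α/2)^2/((2*(n:ℝ)+1)^2*π^2)) := by
      rw [eq_div_iff b1]
      field_simp
      ring
    have e2 : (1 - x / (2 * ((n:ℝ) + 1) * π + α)) * (1 + x / (2 * ((n:ℝ) + 1) * π - α))
        = (1 - ((x-α)/2)^2/(((n:ℝ)+1)^2*π^2)) / (1 - (α/2)^2/(((n:ℝ)+1)^2*π^2)) := by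
      rw [eq_div_iff b2]
      field_simp
      ring
    calc (1 - 4*((x+α)/2)^2/((2*(n:ℝ)+1)^2*π^2)) * (1 - 4*(α/2)^2/((2*(n:ℝ)+1)^2*π^2))⁻¹ *
        ((1 - ((x-α)/2)^2/(((n:ℝ)+1)^2*π^2)) * (1 - (α/2)^2/(((n:ℝ)+1)^2*π^2))⁻¹)
        = ((1 - 4*((x+α)/2)^2/((2*(n:ℝ)+1)^2*π^2)) / (1 - 4*(α/2)^2/((2*(n:ℝ)+1)^2*π^2))) *
          ((1 - ((x-α)/2)^2/(((n:ℝ)+1)^2*π^2)) / (1 - (α/2)^2/(((n:ℝ)+1)^2*π^2))) := by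
          ring
      _ = ((1 - x / ((2 * ((n:ℝ) + 1) - 1) * π - α)) * (1 + x / ((2 * ((n:ℝ) + 1) - 1) * π + α))) *
          ((1 - x / (2 * ((n:ℝ) + 1) * π + α)) * (1 + x / (2 * ((n:ℝ) + 1) * π - α))) := by
          rw [← e1, ← e2]
      _ = (1 - x / ((2 * ((n:ℝ) + 1) - 1) * π - α)) * (1 + x / ((2 * ((n:ℝ) + 1) - 1) * π + α)) *
          (1 - x / (2 * ((n:ℝ) + 1) * π + α)) * (1 + x / (2 * ((n:ℝ) + 1) * π - α)) := by
          ring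
  rw [hfun] at r
  refine ⟨_, r, ?_⟩
  -- value computation
  have hx : x = (x+α)/2 + (x-α)/2 := by ring
  have hα' : α = (x+α)/2 - (x-α)/2 := by ring
  have hsinx : Real.sin x = Real.sin ((x+α)/2) * Real.cos ((x-α)/2)
      + Real.cos ((x+α)/2) * Real.sin ((x-α)/2) := by
    conv_lhs => rw [hx]
    exact Real.sin_add _ _
  have hsinα1 : Real.sin α = Real.sin ((x+α)/2) * Real.cos ((x-α)/2)
      - Real.cos ((x+α)/2) * Real.sin ((x-α)/2) := by
    conv_lhs => rw [hα']
    exact Real.sin_sub _ _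
  have hsinα2 : Real.sin α = 2 * Real.sin (α/2) * Real.cos (α/2) := by
    conv_lhs => rw [show α = 2 * (α/2) from by ring]
    exact Real.sin_two_mul _
  have hLβ2 : Lβ * α = 2 * Real.sin (α/2) := by linear_combination 2*hβLβ
  have hLβ_eq : Lβ = 2 * Real.sin (α/2) / α := by rw [eq_div_iff hα0]; exact hLβ2
  have hLβ_inv : Lβ⁻¹ = α / (2 * Real.sin (α/2)) := by rw [hLβ_eq, inv_div]
  rw [hLβ_inv]
  have h2sβ : 2 * Real.sin (α/2) ≠ 0 := mul_ne_zero two_ne_zero hsinβ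
  have hnum : Real.sin α - Real.sin x = -2 * Real.cos ((x+α)/2) * Real.sin ((x-α)/2) := by
    rw [hsinx, hsinα1]; ring
  have hv2 : (x - α) * Lv = 2 * Real.sin ((x-α)/2) := by linear_combination 2*hvLv
  field_simp
  linear_combination (2*Real.sin (α/2)*Real.cos (α/2)) * hnum + Real.sin α * Real.cos ((x+α)/2) * hv2 + 2*Real.cos ((x+α)/2) * Real.sin ((x-α)/2) * hsinα2
end
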